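/- arXiv:2304.14239 — 5 statements merged into one kernel-verified Lean document; each statement's English description precedes it below -/
import Mathlib

section
/- For any multi-index α = (α₁,…,α_d) of nonnegative integers, the monomial x₁^{α₁}⋯x_d^{α_d} equals (1/|α|!) Σ_{p ≤ α} (−1)^{|α|−|p|} C(α₁,p₁)⋯C(α_d,p_d) (p₁x₁+⋯+p_d x_d)^{|α|}, where the sum is over all p ∈ ℤ₊ᵈ with pᵢ ≤ αᵢ for all i, and |α| = α₁+⋯+α_d. -/
open Finset

lemma fd_step (j : ℕ) :
    fwdDiff 1 (fun k : ℕ => (k : ℝ) ^ j) =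
      ∑ i ∈ range j, (j.choose i : ℝ) • (fun k : ℕ => (k : ℝ) ^ i) := by
  funext k
  have h : ((k : ℝ) + 1) ^ j = ∑ i ∈ range (j + 1), (k : ℝ) ^ i * (j.choose i : ℝ) := by
    rw [add_pow]; simp
  simp only [fwdDiff, Nat.cast_add, Nat.cast_one, h, sum_range_succ, Finset.sum_apply, Pi.smul_apply,
    smul_eq_mul]
  simp [mul_comm]

lemma fd_zero : ∀ j m : ℕ, j < m →
    (fwdDiff 1)^[m] (fun k : ℕ => (k : ℝ) ^ j) = fun _ => 0 := by
  intro j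
  induction j using Nat.strong_induction_on with
  | _ j IH =>
    intro m hm
    obtain ⟨m', rfl⟩ : ∃ m', m = m' + 1 := ⟨m - 1, by omega⟩
    rw [Function.iterate_succ_apply, fd_step, fwdDiff_iter_finset_sum]
    funext k
    simp only [Finset.sum_apply, Pi.smul_apply]
    rw [Finset.sum_eq_zero]
    intro i hi
    rw [fwdDiff_iter_const_smul, IH i (mem_range.1 hi) m'
      (by have := mem_range.1 hi; omega)]
    simp

lemma fd_self : ∀ m : ℕ, (fwdDiff 1)^[m] (fun k : ℕ => (k : ℝ) ^ m)
    = fun _ => (m.factorial : ℝ) := by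
  intro m
  induction m with
  | zero => funext k; simp
  | succ m IH =>
    rw [Function.iterate_succ_apply, fd_step, fwdDiff_iter_finset_sum, sum_range_succ]
    funext k
    simp only [Finset.sum_apply, Pi.smul_apply, Pi.add_apply]
    rw [Finset.sum_eq_zero (fun i hi => by
      rw [fwdDiff_iter_const_smul, fd_zero i m (mem_range.1 hi)]; simp)]
    rw [fwdDiff_iter_const_smul, IH]
    simp [Nat.factorial_succ, Nat.choose_succ_self_right]

/-- the 1-dim key sum -/
lemma key_sum (m j : ℕ) :
    ∑ k ∈ range (m + 1), (-1 : ℝ) ^ (m - k) * (m.choose k : ℝ) * (k : ℝ) ^ j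
      = (fwdDiff 1)^[m] (fun k : ℕ => (k : ℝ) ^ j) 0 := by
  rw [fwdDiff_iter_eq_sum_shift]
  congr 1
  funext k
  simp [zsmul_eq_mul, mul_comm, mul_assoc, mul_left_comm]

lemma key_zero (m j : ℕ) (h : j < m) :
    ∑ k ∈ range (m + 1), (-1 : ℝ) ^ (m - k) * (m.choose k : ℝ) * (k : ℝ) ^ j = 0 := by
  rw [key_sum, fd_zero j m h]

lemma key_self (m : ℕ) :
    ∑ k ∈ range (m + 1), (-1 : ℝ) ^ (m - k) * (m.choose k : ℝ) * (k : ℝ) ^ m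
      = (m.factorial : ℝ) := by
  rw [key_sum, fd_self m]

/-- Every monomial `x₁^{α₁}⋯x_d^{α_d}` is a sum of `|α|`-th powers of linear forms:
`x^α = (1/|α|!) Σ_{p ≤ α} (−1)^{|α|−|p|} C(α₁,p₁)⋯C(α_d,p_d) (p₁x₁+⋯+p_d x_d)^{|α|}`. -/
theorem monomial_eq_sum_pow_linear_forms (d : ℕ) (α : Fin d → ℕ) (x : Fin d → ℝ) :
    ∏ i, x i ^ α i =
      (1 / (Nat.factorial (∑ i, α i) : ℝ)) *
        ∑ p ∈ Fintype.piFinset (fun i => Finset.range (α i + 1)),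
          (-1 : ℝ) ^ ((∑ i, α i) - (∑ i, p i)) *
            (∏ i, ((α i).choose (p i) : ℝ)) *
            (∑ i, (p i : ℝ) * x i) ^ (∑ i, α i) := by
  classical
  set n := ∑ i, α i with hn
  set g : (Fin d → ℕ) → (Fin d → ℕ) → ℝ := fun β p =>
    (Nat.multinomial Finset.univ β : ℝ) * (∏ i, x i ^ β i) *
      ∏ i, ((-1 : ℝ) ^ (α i - p i) * ((α i).choose (p i) : ℝ) * (p i : ℝ) ^ β i) with hg
  have step1 : ∀ p ∈ Fintype.piFinset (fun i => Finset.range (α i + 1)),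
      (-1 : ℝ) ^ (n - (∑ i, p i)) * (∏ i, ((α i).choose (p i) : ℝ)) *
        (∑ i, (p i : ℝ) * x i) ^ n
        = ∑ β ∈ Finset.piAntidiag Finset.univ n, g β p := by
    intro p hp
    have hple : ∀ i, p i ≤ α i := by
      intro i
      have := (Fintype.mem_piFinset.1 hp) i
      simpa [Nat.lt_succ_iff] using this
    have hsign : ((-1 : ℝ)) ^ (n - ∑ i, p i) = ∏ i, (-1 : ℝ) ^ (α i - p i) := by
      rw [Finset.prod_pow_eq_pow_sum]
      congr 1
      exact (Finset.sum_tsub_distrib Finset.univ (fun i _ => hple i)).symm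
    rw [Finset.sum_pow_eq_sum_piAntidiag, Finset.mul_sum]
    refine Finset.sum_congr rfl fun β hβ => ?_
    rw [hg]
    simp only [mul_pow, Finset.prod_mul_distrib, hsign]
    ring
  rw [Finset.sum_congr rfl step1, Finset.sum_comm]
  have step3 : ∀ β ∈ Finset.piAntidiag Finset.univ n,
      ∑ p ∈ Fintype.piFinset (fun i => Finset.range (α i + 1)), g β p
        = (Nat.multinomial Finset.univ β : ℝ) * (∏ i, x i ^ β i) *
          ∏ i, ∑ k ∈ Finset.range (α i + 1),
            ((-1 : ℝ) ^ (α i - k) * ((α i).choose k : ℝ) * (k : ℝ) ^ β i) := by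
    intro β _
    rw [Finset.prod_univ_sum, ← Finset.mul_sum]
  rw [Finset.sum_congr rfl step3]
  have hmem : α ∈ Finset.piAntidiag Finset.univ n := by
    simp [Finset.mem_piAntidiag, hn]
  rw [Finset.sum_eq_single_of_mem α hmem]
  · have heval : ∀ i : Fin d, ∑ k ∈ Finset.range (α i + 1),
        ((-1 : ℝ) ^ (α i - k) * ((α i).choose k : ℝ) * (k : ℝ) ^ α i)
          = ((α i).factorial : ℝ) := fun i => key_self (α i)
    rw [Finset.prod_congr rfl (fun i _ => heval i)]
    have hspec : ((∏ i, (α i).factorial : ℕ) : ℝ) * (Nat.multinomial Finset.univ α : ℝ)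
        = (n.factorial : ℝ) := by
      rw [← Nat.cast_mul, Nat.multinomial_spec]
    push_cast at hspec
    have h2 : ((Nat.multinomial Finset.univ α : ℝ) * ∏ i, x i ^ α i) *
        (∏ i, ((α i).factorial : ℝ)) = (n.factorial : ℝ) * ∏ i, x i ^ α i := by
      rw [← hspec]; ring
    rw [h2, one_div, inv_mul_cancel_left₀]
    exact_mod_cast n.factorial_pos.ne'
  · intro β hβ hne
    obtain ⟨i0, hi0⟩ : ∃ i0, β i0 < α i0 := by
      by_contra hc
      push_neg at hc
      apply hne
      have hsum : ∑ i, β i = n := (Finset.mem_piAntidiag.1 hβ).1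
      funext i
      by_contra hne2
      have hlt : α i < β i := lt_of_le_of_ne (hc i) (Ne.symm hne2)
      have : n < ∑ i, β i := by
        rw [hn]
        exact Finset.sum_lt_sum (fun j _ => hc j) ⟨i, Finset.mem_univ i, hlt⟩
      omega
    have hz : (∏ i, ∑ k ∈ Finset.range (α i + 1),
        ((-1 : ℝ) ^ (α i - k) * ((α i).choose k : ℝ) * (k : ℝ) ^ β i)) = 0 :=
      Finset.prod_eq_zero (Finset.mem_univ i0) (key_zero (α i0) (β i0) hi0)
    rw [hz, mul_zero]
end

section
/- Let P ⊂ ℝᵈ be a polytope, u ∈ Sᵈ⁻¹, and let C be a connected component of the complement of {⟨u,v⟩ : v vertex of P} in ℝ. Then for all β₁, β₂ ∈ C with P ∩ H(βᵢ) nonempty and of dimension d−1, the polytopes P ∩ H(β₁) and P ∩ H(β₂) have the same normal fan (inside the hyperplane, after translating to a common hyperplane through the origin). -/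
open RealInnerProductSpace

/-- The face of `K` in direction `w`: the set of points of `K` maximizing `⟨w,·⟩`. -/
def argmaxFace {d : ℕ} (K : Set (EuclideanSpace ℝ (Fin d))) (w : EuclideanSpace ℝ (Fin d)) :
    Set (EuclideanSpace ℝ (Fin d)) :=
  {x ∈ K | ∀ y ∈ K, ⟪w, y⟫ ≤ ⟪w, x⟫}

section Auxiliary

variable {F : Type*} [NormedAddCommGroup F] [InnerProductSpace ℝ F] [DecidableEq F]

/-- The point where the segment `[a,b]` crosses the hyperplane `⟪u,·⟫ = β`. -/
noncomputable def crossPt (u : F) (β : ℝ) (a b : F) : F :=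
  a + ((β - ⟪u, a⟫) / (⟪u, b⟫ - ⟪u, a⟫)) • (b - a)

lemma crossPt_affine (u : F) (a b : F) {s t γ₁ γ₂ : ℝ} (hst : s + t = 1) :
    crossPt u (s * γ₁ + t * γ₂) a b = s • crossPt u γ₁ a b + t • crossPt u γ₂ a b := by
  unfold crossPt
  have h1 : (s * γ₁ + t * γ₂ - ⟪u, a⟫) / (⟪u, b⟫ - ⟪u, a⟫)
      = s * ((γ₁ - ⟪u, a⟫) / (⟪u, b⟫ - ⟪u, a⟫)) + t * ((γ₂ - ⟪u, a⟫) / (⟪u, b⟫ - ⟪u, a⟫)) := by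
    rw [mul_div_assoc', mul_div_assoc', ← add_div]
    congr 1
    linear_combination ⟪u, a⟫ * hst
  rw [h1]
  have h2 : s • a + t • a = a := by rw [← add_smul, hst, one_smul]
  rw [smul_add, smul_add, add_smul, mul_smul, mul_smul]
  nth_rewrite 1 [← h2]
  abel

lemma inner_crossPt (u w : F) (β : ℝ) (a b : F) :
    ⟪w, crossPt u β a b⟫ = ⟪w, a⟫ + ((β - ⟪u, a⟫) / (⟪u, b⟫ - ⟪u, a⟫)) * ⟪w, b - a⟫ := by
  unfold crossPt
  rw [inner_add_right, real_inner_smul_right]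

lemma inner_u_crossPt (u : F) {β : ℝ} {a b : F} (ha : ⟪u, a⟫ < β) (hb : β < ⟪u, b⟫) :
    ⟪u, crossPt u β a b⟫ = β := by
  have hδ : ⟪u, b⟫ - ⟪u, a⟫ ≠ 0 := by nlinarith
  rw [inner_crossPt, inner_sub_right]
  field_simp
  ring

lemma crossPt_mem_segment (u : F) {β : ℝ} {a b : F} (ha : ⟪u, a⟫ < β) (hb : β < ⟪u, b⟫) :
    crossPt u β a b ∈ segment ℝ a b := by
  rw [segment_eq_image']
  refine ⟨(β - ⟪u, a⟫) / (⟪u, b⟫ - ⟪u, a⟫), ⟨?_, ?_⟩, rfl⟩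
  · apply div_nonneg <;> linarith
  · apply div_le_one_of_le₀ <;> linarith

/-- The finite set of crossing points of segments from `DF` to `UF` with the hyperplane at
level `β`. -/
noncomputable def crossSet (u : F) (DF UF : Finset F) (β : ℝ) : Finset F :=
  (DF ×ˢ UF).image fun p => crossPt u β p.1 p.2

lemma genSectionAux (u : F) (DF UF : Finset F) (β : ℝ)
    (hD : ∀ v ∈ DF, ⟪u, v⟫ < β) (hU : ∀ v ∈ UF, β < ⟪u, v⟫) :
    ∀ n : ℕ, ∀ s : Finset F, ∀ w : F → ℝ,
      ({v ∈ s | w v ≠ 0}).card ≤ n → s ⊆ DF ∪ UF →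
      (∀ v ∈ s, 0 ≤ w v) → ∑ v ∈ s, w v = 1 → ⟪u, ∑ v ∈ s, w v • v⟫ = β →
      ∑ v ∈ s, w v • v ∈ convexHull ℝ ((crossSet u DF UF β : Finset F) : Set F) := by
  intro n
  induction n with
  | zero =>
    intro s w hcard _ hw0 hsum _
    exfalso
    rw [Nat.le_zero, Finset.card_eq_zero, Finset.filter_eq_empty_iff] at hcard
    have : ∑ v ∈ s, w v = 0 := Finset.sum_eq_zero fun v hv => not_not.1 (hcard hv)
    simp [this] at hsum
  | succ n ih =>
    intro s w hcard hsub hw0 hsum hβx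
    -- find a point of `DF` with positive weight
    have existsD : ∃ a ∈ s, a ∈ DF ∧ 0 < w a := by
      by_contra h
      push_neg at h
      have hterm : ∀ v ∈ s, w v * β ≤ w v * ⟪u, v⟫ := by
        intro v hv
        rcases (hw0 v hv).eq_or_lt with h0 | h0
        · rw [← h0]; simp
        · have hvU : v ∈ UF := by
            rcases Finset.mem_union.1 (hsub hv) with h' | h'
            · exact absurd h0 (not_lt.2 (h v hv h'))
            · exact h'
          have := hU v hvU
          nlinarith
      have hex : ∃ v ∈ s, w v * β < w v * ⟪u, v⟫ := by
        have hne : ∃ v ∈ s, w v ≠ 0 := by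
          apply Finset.exists_ne_zero_of_sum_ne_zero (by rw [hsum]; norm_num)
        obtain ⟨v, hv, hv0⟩ := hne
        have hwv : 0 < w v := (hw0 v hv).lt_of_ne (Ne.symm hv0)
        refine ⟨v, hv, ?_⟩
        have hvU : v ∈ UF := by
          rcases Finset.mem_union.1 (hsub hv) with h' | h'
          · exact absurd hwv (not_lt.2 (h v hv h'))
          · exact h'
        have := hU v hvU
        nlinarith
      have : ∑ v ∈ s, w v * β < ∑ v ∈ s, w v * ⟪u, v⟫ := Finset.sum_lt_sum hterm hex
      rw [← Finset.sum_mul, hsum, one_mul] at this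
      rw [inner_sum] at hβx
      simp_rw [real_inner_smul_right] at hβx
      linarith [hβx]
    have existsU : ∃ b ∈ s, b ∈ UF ∧ 0 < w b := by
      by_contra h
      push_neg at h
      have hterm : ∀ v ∈ s, w v * ⟪u, v⟫ ≤ w v * β := by
        intro v hv
        rcases (hw0 v hv).eq_or_lt with h0 | h0
        · rw [← h0]; simp
        · have hvD : v ∈ DF := by
            rcases Finset.mem_union.1 (hsub hv) with h' | h'
            · exact h'
            · exact absurd h0 (not_lt.2 (h v hv h'))
          have := hD v hvD
          nlinarith
      have hex : ∃ v ∈ s, w v * ⟪u, v⟫ < w v * β := by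
        have hne : ∃ v ∈ s, w v ≠ 0 := by
          apply Finset.exists_ne_zero_of_sum_ne_zero (by rw [hsum]; norm_num)
        obtain ⟨v, hv, hv0⟩ := hne
        have hwv : 0 < w v := (hw0 v hv).lt_of_ne (Ne.symm hv0)
        refine ⟨v, hv, ?_⟩
        have hvD : v ∈ DF := by
          rcases Finset.mem_union.1 (hsub hv) with h' | h'
          · exact h'
          · exact absurd hwv (not_lt.2 (h v hv h'))
        have := hD v hvD
        nlinarith
      have : ∑ v ∈ s, w v * ⟪u, v⟫ < ∑ v ∈ s, w v * β := Finset.sum_lt_sum hterm hex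
      rw [← Finset.sum_mul, hsum, one_mul] at this
      rw [inner_sum] at hβx
      simp_rw [real_inner_smul_right] at hβx
      linarith [hβx]
    obtain ⟨a, has, haD, hwa⟩ := existsD
    obtain ⟨b, hbs, hbU, hwb⟩ := existsU
    have hαa : ⟪u, a⟫ < β := hD a haD
    have hαb : β < ⟪u, b⟫ := hU b hbU
    have hab : a ≠ b := fun h => by rw [h] at hαa; linarith
    set r : ℝ := (β - ⟪u, a⟫) / (⟪u, b⟫ - ⟪u, a⟫) with hr
    have hr0 : 0 < r := div_pos (by linarith) (by linarith)
    have hr1 : r < 1 := (div_lt_one (by linarith)).2 (by linarith)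
    set c : F := crossPt u β a b with hcdef
    have hcmem : c ∈ crossSet u DF UF β := by
      unfold crossSet
      apply Finset.mem_image.2
      exact ⟨(a, b), Finset.mem_product.2 ⟨haD, hbU⟩, rfl⟩
    have hchull : c ∈ convexHull ℝ ((crossSet u DF UF β : Finset F) : Set F) :=
      subset_convexHull ℝ _ hcmem
    set t : ℝ := min (w a / (1 - r)) (w b / r) with ht
    have ht0 : 0 < t := lt_min (div_pos hwa (by linarith)) (div_pos hwb hr0)
    have hta : t * (1 - r) ≤ w a := by
      have := min_le_left (w a / (1 - r)) (w b / r)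
      rw [← ht] at this
      calc t * (1 - r) ≤ (w a / (1 - r)) * (1 - r) := by nlinarith
        _ = w a := div_mul_cancel₀ _ (by linarith)
    have htb : t * r ≤ w b := by
      have := min_le_right (w a / (1 - r)) (w b / r)
      rw [← ht] at this
      calc t * r ≤ (w b / r) * r := by nlinarith
        _ = w b := div_mul_cancel₀ _ (by linarith)
    have htor : t = w a / (1 - r) ∨ t = w b / r := min_choice _ _
    -- new weights
    set w2 : F → ℝ := Function.update (Function.update w a (w a - t * (1 - r))) b (w b - t * r)
      with hw2
    have hw2a : w2 a = w a - t * (1 - r) := by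
      rw [hw2, Function.update_of_ne hab, Function.update_self]
    have hw2b : w2 b = w b - t * r := by rw [hw2, Function.update_self]
    have hw2other : ∀ v, v ≠ a → v ≠ b → w2 v = w v := by
      intro v hva hvb
      rw [hw2, Function.update_of_ne hvb, Function.update_of_ne hva]
    have hw2nonneg : ∀ v ∈ s, 0 ≤ w2 v := by
      intro v hv
      rcases eq_or_ne v a with rfl | hva
      · rw [hw2a]; linarith
      rcases eq_or_ne v b with rfl | hvb
      · rw [hw2b]; linarith
      · rw [hw2other v hva hvb]; exact hw0 v hv
    have hzero : w2 a = 0 ∨ w2 b = 0 := by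
      rcases htor with h | h
      · left; rw [hw2a, h, div_mul_cancel₀ _ (by linarith : (1:ℝ) - r ≠ 0)]; ring
      · right; rw [hw2b, h, div_mul_cancel₀ _ (by linarith : r ≠ 0)]; ring
    -- sum decomposition: peel off a and b
    have hbs' : b ∈ s.erase a := Finset.mem_erase.2 ⟨fun h => hab h.symm, hbs⟩
    have hpeel : ∀ g : F → F, ∑ v ∈ s, g v
        = g a + g b + ∑ v ∈ (s.erase a).erase b, g v := by
      intro g
      rw [← Finset.add_sum_erase _ _ has, ← Finset.add_sum_erase _ _ hbs', add_assoc]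
    have hpeelR : ∀ g : F → ℝ, ∑ v ∈ s, g v
        = g a + g b + ∑ v ∈ (s.erase a).erase b, g v := by
      intro g
      rw [← Finset.add_sum_erase _ _ has, ← Finset.add_sum_erase _ _ hbs', add_assoc]
    have hrestsame : ∑ v ∈ (s.erase a).erase b, w2 v • v
        = ∑ v ∈ (s.erase a).erase b, w v • v := by
      apply Finset.sum_congr rfl
      intro v hv
      have hvb := (Finset.mem_erase.1 hv).1
      have hva := (Finset.mem_erase.1 (Finset.mem_erase.1 hv).2).1
      rw [hw2other v hva hvb]
    have hrestsameR : ∑ v ∈ (s.erase a).erase b, w2 v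
        = ∑ v ∈ (s.erase a).erase b, w v := by
      apply Finset.sum_congr rfl
      intro v hv
      have hvb := (Finset.mem_erase.1 hv).1
      have hva := (Finset.mem_erase.1 (Finset.mem_erase.1 hv).2).1
      rw [hw2other v hva hvb]
    have hcform : c = a + r • (b - a) := rfl
    have hsum2 : ∑ v ∈ s, w2 v = 1 - t := by
      rw [hpeelR w2, hrestsameR, hw2a, hw2b]
      have := hpeelR w
      rw [hsum] at this
      linarith
    have hdecomp : ∑ v ∈ s, w v • v = t • c + ∑ v ∈ s, w2 v • v := by
      rw [hpeel (fun v => w v • v), hpeel (fun v => w2 v • v), hrestsame, hw2a, hw2b, hcform]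
      module
    have htle : t ≤ 1 := by
      have hpairsub : ({a, b} : Finset F) ⊆ s := by
        intro v hv
        rcases Finset.mem_insert.1 hv with rfl | hv'
        · exact has
        · rw [Finset.mem_singleton.1 hv']; exact hbs
      have hwab : w a + w b ≤ ∑ v ∈ s, w v := by
        have := Finset.sum_le_sum_of_subset_of_nonneg hpairsub
          (fun v hv _ => hw0 v hv)
        rwa [Finset.sum_pair hab] at this
      rw [hsum] at hwab
      nlinarith
    rcases eq_or_lt_of_le htle with ht1 | ht1
    · -- t = 1 : the point is exactly the crossing point
      have hall0 : ∀ v ∈ s, w2 v = 0 := by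
        have h0 : ∑ v ∈ s, w2 v = 0 := by rw [hsum2, ht1]; ring
        exact fun v hv => (Finset.sum_eq_zero_iff_of_nonneg hw2nonneg).1 h0 v hv
      have hrest0 : ∑ v ∈ s, w2 v • v = 0 :=
        Finset.sum_eq_zero fun v hv => by rw [hall0 v hv, zero_smul]
      rw [hdecomp, hrest0, add_zero, ht1, one_smul]
      exact hchull
    · -- t < 1 : use the inductive hypothesis on the rescaled remaining weights
      set w3 : F → ℝ := fun v => (1 - t)⁻¹ * w2 v with hw3
      have h1t : (1 : ℝ) - t ≠ 0 := by linarith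
      have hsum3 : ∑ v ∈ s, w3 v = 1 := by
        simp only [hw3]; rw [← Finset.mul_sum, hsum2, inv_mul_cancel₀ h1t]
      have hw3nonneg : ∀ v ∈ s, 0 ≤ w3 v := fun v hv =>
        mul_nonneg (inv_nonneg.2 (by linarith)) (hw2nonneg v hv)
      have hcard3 : ({v ∈ s | w3 v ≠ 0}).card ≤ n := by
        have hss : {v ∈ s | w3 v ≠ 0} ⊂ {v ∈ s | w v ≠ 0} := by
          constructor
          · intro v hv
            obtain ⟨hvs, hv3⟩ := Finset.mem_filter.1 hv
            have hv2 : w2 v ≠ 0 := by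
              intro h0
              apply hv3
              simp only [hw3]; rw [h0, mul_zero]
            refine Finset.mem_filter.2 ⟨hvs, ?_⟩
            rcases eq_or_ne v a with rfl | hva
            · exact ne_of_gt hwa
            rcases eq_or_ne v b with rfl | hvb
            · exact ne_of_gt hwb
            · rw [← hw2other v hva hvb]; exact hv2
          · intro hsup
            rcases hzero with h0 | h0
            · have haf : a ∈ {v ∈ s | w v ≠ 0} := Finset.mem_filter.2 ⟨has, ne_of_gt hwa⟩
              have := hsup haf
              obtain ⟨-, h3⟩ := Finset.mem_filter.1 this
              exact h3 (by simp only [hw3]; rw [h0, mul_zero])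
            · have hbf : b ∈ {v ∈ s | w v ≠ 0} := Finset.mem_filter.2 ⟨hbs, ne_of_gt hwb⟩
              have := hsup hbf
              obtain ⟨-, h3⟩ := Finset.mem_filter.1 this
              exact h3 (by simp only [hw3]; rw [h0, mul_zero])
        have := Finset.card_lt_card hss
        omega
      have h3eq : ∑ v ∈ s, w3 v • v = (1 - t)⁻¹ • ∑ v ∈ s, w2 v • v := by
        rw [Finset.smul_sum]
        exact Finset.sum_congr rfl fun v hv => by simp only [hw3]; rw [mul_smul]
      have hinner2 : ⟪u, ∑ v ∈ s, w2 v • v⟫ = (1 - t) * β := by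
        have : ∑ v ∈ s, w2 v • v = (∑ v ∈ s, w v • v) - t • c := by
          rw [hdecomp]; abel
        rw [this, inner_sub_right, hβx, real_inner_smul_right,
          inner_u_crossPt u hαa hαb]
        ring
      have hβx3 : ⟪u, ∑ v ∈ s, w3 v • v⟫ = β := by
        rw [h3eq, real_inner_smul_right, hinner2]
        field_simp
      have ihx := ih s w3 hcard3 hsub hw3nonneg hsum3 hβx3
      have hfinal : ∑ v ∈ s, w v • v = t • c + (1 - t) • ∑ v ∈ s, w3 v • v := by
        rw [h3eq, smul_smul, mul_inv_cancel₀ h1t, one_smul, hdecomp]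
      rw [hfinal]
      exact (convex_convexHull ℝ _) hchull ihx ht0.le (by linarith) (by ring)

lemma genSection (u : F) (DF UF : Finset F) (β : ℝ)
    (hD : ∀ v ∈ DF, ⟪u, v⟫ < β) (hU : ∀ v ∈ UF, β < ⟪u, v⟫) {x : F}
    (hx : x ∈ convexHull ℝ ((DF ∪ UF : Finset F) : Set F)) (hxβ : ⟪u, x⟫ = β) :
    x ∈ convexHull ℝ ((crossSet u DF UF β : Finset F) : Set F) := by
  rw [Finset.convexHull_eq] at hx
  obtain ⟨w, hw0, hw1, hcm⟩ := hx
  rw [Finset.centerMass_eq_of_sum_1 _ id hw1] at hcm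
  simp only [id] at hcm
  rw [← hcm] at hxβ ⊢
  exact genSectionAux u DF UF β hD hU _ (DF ∪ UF) w le_rfl (Finset.Subset.refl _) hw0 hw1 hxβ

/-- The maximum of `⟪w,·⟫` over the crossing points at level `β`. -/
noncomputable def gfun (u : F) (DF UF : Finset F) (hne : (DF ×ˢ UF).Nonempty)
    (w : F) (β : ℝ) : ℝ :=
  (DF ×ˢ UF).sup' hne fun p => ⟪w, crossPt u β p.1 p.2⟫

section G

variable (u : F) (DF UF : Finset F) (hne : (DF ×ˢ UF).Nonempty) {β₀ β₃ : ℝ}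

lemma crossPt_mem_hull (hD : ∀ v ∈ DF, ⟪u, v⟫ < β₀) (hU : ∀ v ∈ UF, β₃ < ⟪u, v⟫) {a b : F} (haD : a ∈ DF) (hbU : b ∈ UF) {β : ℝ} (hβ : β ∈ Set.Icc β₀ β₃) :
    crossPt u β a b ∈ convexHull ℝ ((DF ∪ UF : Finset F) : Set F) := by
  have hseg := crossPt_mem_segment u (lt_of_lt_of_le (hD a haD) hβ.1)
    (lt_of_le_of_lt hβ.2 (hU b hbU))
  exact segment_subset_convexHull (by simp [haD]) (by simp [hbU]) hseg

lemma inner_u_crossPt' (hD : ∀ v ∈ DF, ⟪u, v⟫ < β₀) (hU : ∀ v ∈ UF, β₃ < ⟪u, v⟫) {a b : F} (haD : a ∈ DF) (hbU : b ∈ UF) {β : ℝ}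
    (hβ : β ∈ Set.Icc β₀ β₃) : ⟪u, crossPt u β a b⟫ = β :=
  inner_u_crossPt u (lt_of_lt_of_le (hD a haD) hβ.1) (lt_of_le_of_lt hβ.2 (hU b hbU))

lemma le_gfun (hD : ∀ v ∈ DF, ⟪u, v⟫ < β₀) (hU : ∀ v ∈ UF, β₃ < ⟪u, v⟫) (w : F) {β : ℝ} (hβ : β ∈ Set.Icc β₀ β₃) {x : F}
    (hx : x ∈ convexHull ℝ ((DF ∪ UF : Finset F) : Set F)) (hxβ : ⟪u, x⟫ = β) :
    ⟪w, x⟫ ≤ gfun u DF UF hne w β := by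
  have hmem := genSection u DF UF β (fun v hv => lt_of_lt_of_le (hD v hv) hβ.1)
    (fun v hv => lt_of_le_of_lt hβ.2 (hU v hv)) hx hxβ
  have hsub : ((crossSet u DF UF β : Finset F) : Set F)
      ⊆ {z : F | ⟪w, z⟫ ≤ gfun u DF UF hne w β} := by
    intro y hy
    obtain ⟨p, hp, rfl⟩ := Finset.mem_image.1 hy
    exact Finset.le_sup' (fun p : F × F => ⟪w, crossPt u β p.1 p.2⟫) hp
  have hconv : Convex ℝ {z : F | ⟪w, z⟫ ≤ gfun u DF UF hne w β} :=
    convex_halfSpace_le ⟨fun x y => inner_add_right w x y, fun c x => by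
      simp [real_inner_smul_right]⟩ _
  exact convexHull_min hsub hconv hmem


lemma gfun_attain (w : F) (β : ℝ) :
    ∃ p ∈ DF ×ˢ UF, gfun u DF UF hne w β = ⟪w, crossPt u β p.1 p.2⟫ := by
  obtain ⟨p, hp, hval⟩ := Finset.exists_mem_eq_sup' hne fun p : F × F => ⟪w, crossPt u β p.1 p.2⟫
  exact ⟨p, hp, hval⟩

lemma inner_crossPt_affine (w : F) (a b : F) {s t γ₁ γ₂ : ℝ} (hst : s + t = 1) :
    ⟪w, crossPt u (s * γ₁ + t * γ₂) a b⟫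
      = s * ⟪w, crossPt u γ₁ a b⟫ + t * ⟪w, crossPt u γ₂ a b⟫ := by
  rw [crossPt_affine u a b hst, inner_add_right, real_inner_smul_right, real_inner_smul_right]

lemma gfun_affine (hD : ∀ v ∈ DF, ⟪u, v⟫ < β₀) (hU : ∀ v ∈ UF, β₃ < ⟪u, v⟫) (h03 : β₀ ≤ β₃)
    (w : F) {s t : ℝ} (hs : 0 ≤ s) (ht : 0 ≤ t) (hst : s + t = 1) :
    gfun u DF UF hne w (s * β₀ + t * β₃)
      = s * gfun u DF UF hne w β₀ + t * gfun u DF UF hne w β₃ := by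
  have hmem : s * β₀ + t * β₃ ∈ Set.Icc β₀ β₃ := by
    have e1 : s * β₀ + t * β₃ = β₀ + t * (β₃ - β₀) := by linear_combination β₀ * hst
    have e2 : s * β₀ + t * β₃ = β₃ - s * (β₃ - β₀) := by linear_combination β₃ * hst
    constructor
    · rw [e1]; nlinarith [mul_nonneg ht (sub_nonneg.2 h03)]
    · rw [e2]; nlinarith [mul_nonneg hs (sub_nonneg.2 h03)]
  apply le_antisymm
  · obtain ⟨p, hp, hval⟩ := gfun_attain u DF UF hne w (s * β₀ + t * β₃)
    rw [hval, inner_crossPt_affine u w p.1 p.2 hst]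
    have h1 : ⟪w, crossPt u β₀ p.1 p.2⟫ ≤ gfun u DF UF hne w β₀ :=
      Finset.le_sup' (fun p : F × F => ⟪w, crossPt u β₀ p.1 p.2⟫) hp
    have h2 : ⟪w, crossPt u β₃ p.1 p.2⟫ ≤ gfun u DF UF hne w β₃ :=
      Finset.le_sup' (fun p : F × F => ⟪w, crossPt u β₃ p.1 p.2⟫) hp
    nlinarith
  · obtain ⟨p, hp, hval⟩ := gfun_attain u DF UF hne w β₀
    obtain ⟨q, hq, hqval⟩ := gfun_attain u DF UF hne w β₃
    obtain ⟨hp1, hp2⟩ := Finset.mem_product.1 hp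
    obtain ⟨hq1, hq2⟩ := Finset.mem_product.1 hq
    set z : F := s • crossPt u β₀ p.1 p.2 + t • crossPt u β₃ q.1 q.2 with hz
    have hzmem : z ∈ convexHull ℝ ((DF ∪ UF : Finset F) : Set F) := by
      apply (convex_convexHull ℝ _)
        (crossPt_mem_hull u DF UF hD hU hp1 hp2 (Set.left_mem_Icc.2 h03))
        (crossPt_mem_hull u DF UF hD hU hq1 hq2 (Set.right_mem_Icc.2 h03)) hs ht hst
    have hzβ : ⟪u, z⟫ = s * β₀ + t * β₃ := by
      rw [hz, inner_add_right, real_inner_smul_right, real_inner_smul_right,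
        inner_u_crossPt' u DF UF hD hU hp1 hp2 (Set.left_mem_Icc.2 h03),
        inner_u_crossPt' u DF UF hD hU hq1 hq2 (Set.right_mem_Icc.2 h03)]
    have := le_gfun u DF UF hne hD hU w hmem hzmem hzβ
    rw [hz, inner_add_right, real_inner_smul_right, real_inner_smul_right, ← hval, ← hqval] at this
    linarith

/-- If a crossing point achieves the maximum at an interior level, the corresponding segment
achieves the maximum at every level. -/
lemma gfun_touch (hD : ∀ v ∈ DF, ⟪u, v⟫ < β₀) (hU : ∀ v ∈ UF, β₃ < ⟪u, v⟫) (h03 : β₀ ≤ β₃)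
    (w : F) {p : F × F} (hp : p ∈ DF ×ˢ UF) {s t : ℝ} (hs : 0 < s) (ht : 0 < t)
    (hst : s + t = 1)
    (hmax : ⟪w, crossPt u (s * β₀ + t * β₃) p.1 p.2⟫ = gfun u DF UF hne w (s * β₀ + t * β₃))
    {s' t' : ℝ} (hs' : 0 ≤ s') (ht' : 0 ≤ t') (hst' : s' + t' = 1) :
    ⟪w, crossPt u (s' * β₀ + t' * β₃) p.1 p.2⟫ = gfun u DF UF hne w (s' * β₀ + t' * β₃) := by
  have h1 : ⟪w, crossPt u β₀ p.1 p.2⟫ ≤ gfun u DF UF hne w β₀ :=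
    Finset.le_sup' (fun p : F × F => ⟪w, crossPt u β₀ p.1 p.2⟫) hp
  have h2 : ⟪w, crossPt u β₃ p.1 p.2⟫ ≤ gfun u DF UF hne w β₃ :=
    Finset.le_sup' (fun p : F × F => ⟪w, crossPt u β₃ p.1 p.2⟫) hp
  rw [inner_crossPt_affine u w p.1 p.2 hst, gfun_affine u DF UF hne hD hU h03 w hs.le ht.le hst]
    at hmax
  have he0 : ⟪w, crossPt u β₀ p.1 p.2⟫ = gfun u DF UF hne w β₀ := by nlinarith
  have he3 : ⟪w, crossPt u β₃ p.1 p.2⟫ = gfun u DF UF hne w β₃ := by nlinarith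
  rw [inner_crossPt_affine u w p.1 p.2 hst', gfun_affine u DF UF hne hD hU h03 w hs' ht' hst',
    he0, he3]

/-- The face of `K` in direction `w` (generic version of `argmaxFace`). -/
def faceSet (K : Set F) (w : F) : Set F := {x ∈ K | ∀ y ∈ K, ⟪w, y⟫ ≤ ⟪w, x⟫}

lemma crossSet_le_gfun (w : F) (β : ℝ) :
    ∀ y ∈ crossSet u DF UF β, ⟪w, y⟫ ≤ gfun u DF UF hne w β := by
  intro y hy
  obtain ⟨p, hp, rfl⟩ := Finset.mem_image.1 hy
  exact Finset.le_sup' (fun p : F × F => ⟪w, crossPt u β p.1 p.2⟫) hp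

lemma value_of_mem_face (hD : ∀ v ∈ DF, ⟪u, v⟫ < β₀) (hU : ∀ v ∈ UF, β₃ < ⟪u, v⟫)
    (w : F) {β : ℝ} (hβ : β ∈ Set.Icc β₀ β₃) {x : F}
    (hx : x ∈ faceSet (convexHull ℝ ((DF ∪ UF : Finset F) : Set F) ∩ {z | ⟪u, z⟫ = β}) w) :
    ⟪w, x⟫ = gfun u DF UF hne w β := by
  obtain ⟨⟨hxh, hxβ⟩, hxmax⟩ := hx
  apply le_antisymm (le_gfun u DF UF hne hD hU w hβ hxh hxβ)
  obtain ⟨p, hp, hval⟩ := gfun_attain u DF UF hne w β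
  obtain ⟨hp1, hp2⟩ := Finset.mem_product.1 hp
  rw [hval]
  exact hxmax _ ⟨crossPt_mem_hull u DF UF hD hU hp1 hp2 hβ,
    inner_u_crossPt' u DF UF hD hU hp1 hp2 hβ⟩

lemma mem_face_of_value (hD : ∀ v ∈ DF, ⟪u, v⟫ < β₀) (hU : ∀ v ∈ UF, β₃ < ⟪u, v⟫)
    (w : F) {β : ℝ} (hβ : β ∈ Set.Icc β₀ β₃) {x : F}
    (hxmem : x ∈ convexHull ℝ ((DF ∪ UF : Finset F) : Set F)) (hxβ : ⟪u, x⟫ = β)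
    (hxval : ⟪w, x⟫ = gfun u DF UF hne w β) :
    x ∈ faceSet (convexHull ℝ ((DF ∪ UF : Finset F) : Set F) ∩ {z | ⟪u, z⟫ = β}) w := by
  refine ⟨⟨hxmem, hxβ⟩, ?_⟩
  intro y hy
  rw [hxval]
  exact le_gfun u DF UF hne hD hU w hβ hy.1 hy.2

include hne in
/-- The key one-directional statement: if the faces of the section at level `βa` in
directions `w₁` and `w₂` coincide, then the face at level `βb` in direction `w₁` is
contained in the one in direction `w₂`. -/
lemma oneDir (hD : ∀ v ∈ DF, ⟪u, v⟫ < β₀) (hU : ∀ v ∈ UF, β₃ < ⟪u, v⟫) (h03 : β₀ ≤ β₃)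
    {sa ta sb tb : ℝ} (hsa : 0 < sa) (hta : 0 < ta) (hsta : sa + ta = 1)
    (hsb : 0 < sb) (htb : 0 < tb) (hstb : sb + tb = 1) (w₁ w₂ : F)
    (h : faceSet (convexHull ℝ ((DF ∪ UF : Finset F) : Set F)
          ∩ {z | ⟪u, z⟫ = sa * β₀ + ta * β₃}) w₁
        = faceSet (convexHull ℝ ((DF ∪ UF : Finset F) : Set F)
          ∩ {z | ⟪u, z⟫ = sa * β₀ + ta * β₃}) w₂) :
    faceSet (convexHull ℝ ((DF ∪ UF : Finset F) : Set F)
        ∩ {z | ⟪u, z⟫ = sb * β₀ + tb * β₃}) w₁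
      ⊆ faceSet (convexHull ℝ ((DF ∪ UF : Finset F) : Set F)
        ∩ {z | ⟪u, z⟫ = sb * β₀ + tb * β₃}) w₂ := by
  set βa := sa * β₀ + ta * β₃ with hβa
  set βb := sb * β₀ + tb * β₃ with hβb
  have hIcc : ∀ {s t : ℝ}, 0 ≤ s → 0 ≤ t → s + t = 1 → s * β₀ + t * β₃ ∈ Set.Icc β₀ β₃ := by
    intro s t hs ht hst
    have e1 : s * β₀ + t * β₃ = β₀ + t * (β₃ - β₀) := by linear_combination β₀ * hst
    have e2 : s * β₀ + t * β₃ = β₃ - s * (β₃ - β₀) := by linear_combination β₃ * hst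
    constructor
    · rw [e1]; nlinarith [mul_nonneg ht (sub_nonneg.2 h03)]
    · rw [e2]; nlinarith [mul_nonneg hs (sub_nonneg.2 h03)]
  have hβaI : βa ∈ Set.Icc β₀ β₃ := hIcc hsa.le hta.le hsta
  have hβbI : βb ∈ Set.Icc β₀ β₃ := hIcc hsb.le htb.le hstb
  intro x hx
  have hx1 : ⟪w₁, x⟫ = gfun u DF UF hne w₁ βb :=
    value_of_mem_face u DF UF hne hD hU w₁ hβbI hx
  obtain ⟨⟨hxh, hxβ⟩, -⟩ := hx
  apply mem_face_of_value u DF UF hne hD hU w₂ hβbI hxh hxβ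
  -- the crucial claim: every crossing point which is `w₁`-maximal at level `βb` is
  -- `w₂`-maximal at level `βb` as well.
  have key : ∀ y ∈ crossSet u DF UF βb, ⟪w₁, y⟫ = gfun u DF UF hne w₁ βb →
      ⟪w₂, y⟫ = gfun u DF UF hne w₂ βb := by
    intro y hy hymax
    obtain ⟨p, hp, rfl⟩ := Finset.mem_image.1 hy
    obtain ⟨hp1, hp2⟩ := Finset.mem_product.1 hp
    have h1 : ⟪w₁, crossPt u βa p.1 p.2⟫ = gfun u DF UF hne w₁ βa :=
      gfun_touch u DF UF hne hD hU h03 w₁ hp hsb htb hstb hymax hsa.le hta.le hsta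
    have h2 := mem_face_of_value u DF UF hne hD hU w₁ hβaI
      (crossPt_mem_hull u DF UF hD hU hp1 hp2 hβaI)
      (inner_u_crossPt' u DF UF hD hU hp1 hp2 hβaI) h1
    rw [h] at h2
    have h3 : ⟪w₂, crossPt u βa p.1 p.2⟫ = gfun u DF UF hne w₂ βa :=
      value_of_mem_face u DF UF hne hD hU w₂ hβaI h2
    exact gfun_touch u DF UF hne hD hU h03 w₂ hp hsa hta hsta h3 hsb.le htb.le hstb
  -- decompose x as a convex combination of crossing points at level βb
  have hxhull : x ∈ convexHull ℝ ((crossSet u DF UF βb : Finset F) : Set F) :=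
    genSection u DF UF βb (fun v hv => lt_of_lt_of_le (hD v hv) hβbI.1)
      (fun v hv => lt_of_le_of_lt hβbI.2 (hU v hv)) hxh hxβ
  rw [Finset.convexHull_eq] at hxhull
  obtain ⟨wt, hwt0, hwt1, hcm⟩ := hxhull
  rw [Finset.centerMass_eq_of_sum_1 _ id hwt1] at hcm
  simp only [id] at hcm
  -- all crossing points with nonzero weight are w₁-maximal
  have hmax1 : ∀ y ∈ crossSet u DF UF βb, wt y ≠ 0 → ⟪w₁, y⟫ = gfun u DF UF hne w₁ βb := by
    intro y hy hwty
    by_contra hne1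
    have hlt : ⟪w₁, y⟫ < gfun u DF UF hne w₁ βb :=
      (crossSet_le_gfun u DF UF hne w₁ βb y hy).lt_of_ne hne1
    have hsumlt : ∑ z ∈ crossSet u DF UF βb, wt z * ⟪w₁, z⟫
        < ∑ z ∈ crossSet u DF UF βb, wt z * gfun u DF UF hne w₁ βb := by
      apply Finset.sum_lt_sum
      · intro z hz
        exact mul_le_mul_of_nonneg_left (crossSet_le_gfun u DF UF hne w₁ βb z hz) (hwt0 z hz)
      · refine ⟨y, hy, ?_⟩
        have := (hwt0 y hy).lt_of_ne (Ne.symm hwty)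
        exact (mul_lt_mul_iff_right₀ this).2 hlt
    rw [← Finset.sum_mul, hwt1, one_mul] at hsumlt
    have hval : ∑ z ∈ crossSet u DF UF βb, wt z * ⟪w₁, z⟫ = ⟪w₁, x⟫ := by
      rw [← hcm, inner_sum]
      exact Finset.sum_congr rfl fun z hz => (real_inner_smul_right _ _ _).symm
    rw [hval, hx1] at hsumlt
    exact lt_irrefl _ hsumlt
  -- compute the w₂-value of x
  have : ⟪w₂, x⟫ = ∑ z ∈ crossSet u DF UF βb, wt z * ⟪w₂, z⟫ := by
    rw [← hcm, inner_sum]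
    exact Finset.sum_congr rfl fun z hz => real_inner_smul_right _ _ _
  rw [this]
  have : ∀ z ∈ crossSet u DF UF βb, wt z * ⟪w₂, z⟫ = wt z * gfun u DF UF hne w₂ βb := by
    intro z hz
    rcases eq_or_ne (wt z) 0 with h0 | h0
    · rw [h0, zero_mul, zero_mul]
    · rw [key z hz (hmax1 z hz h0)]
  rw [Finset.sum_congr rfl this, ← Finset.sum_mul, hwt1, one_mul]


end G

lemma argmaxFace_eq_faceSet {d : ℕ} (K : Set (EuclideanSpace ℝ (Fin d)))
    (w : EuclideanSpace ℝ (Fin d)) : argmaxFace K w = faceSet K w := rfl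

end Auxiliary

/-- For a fixed unit direction `u` and `β₁, β₂` in the same connected component of the
complement of `{⟨u,v⟩ : v vertex of P}`, the full-dimensional parallel sections
`P ∩ H(β₁)` and `P ∩ H(β₂)` are normally equivalent: their normal fans inside the hyperplane
`u^⊥` coincide, i.e. two directions `w₁, w₂ ∈ u^⊥` select the same face of `P ∩ H(β₁)` if and
only if they select the same face of `P ∩ H(β₂)`. -/
theorem parallel_sections_normally_equivalent {d : ℕ} (V : Finset (EuclideanSpace ℝ (Fin d)))
    (P : Set (EuclideanSpace ℝ (Fin d)))
    (hP : P = convexHull ℝ (V : Set (EuclideanSpace ℝ (Fin d))))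
    (u : EuclideanSpace ℝ (Fin d)) (hu : ‖u‖ = 1)
    (S : Set ℝ) (hS : S = {β : ℝ | ∀ v ∈ Set.extremePoints ℝ P, ⟪u, v⟫ ≠ β})
    (β₁ β₂ : ℝ) (hβ₁ : β₁ ∈ S) (hβ₂ : β₂ ∈ connectedComponentIn S β₁)
    (Q₁ Q₂ : Set (EuclideanSpace ℝ (Fin d)))
    (hQ₁ : Q₁ = P ∩ {x | ⟪u, x⟫ = β₁}) (hQ₂ : Q₂ = P ∩ {x | ⟪u, x⟫ = β₂})
    (hne₁ : Q₁.Nonempty) (hne₂ : Q₂.Nonempty)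
    (hdim₁ : Module.finrank ℝ (vectorSpan ℝ Q₁) = d - 1)
    (hdim₂ : Module.finrank ℝ (vectorSpan ℝ Q₂) = d - 1) :
    ∀ w₁ w₂ : EuclideanSpace ℝ (Fin d), ⟪u, w₁⟫ = 0 → ⟪u, w₂⟫ = 0 →
      (argmaxFace Q₁ w₁ = argmaxFace Q₁ w₂ ↔ argmaxFace Q₂ w₁ = argmaxFace Q₂ w₂) := by
  classical
  intro w₁ w₂ _ _
  -- `P` is a compact convex set with finitely many extreme points
  have hPconv : Convex ℝ P := hP ▸ convex_convexHull ℝ _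
  have hPcomp : IsCompact P := hP ▸ V.finite_toSet.isCompact_convexHull ℝ
  have hVxV : Set.extremePoints ℝ P ⊆ ↑V := hP ▸ extremePoints_convexHull_subset
  have hVxfin : (Set.extremePoints ℝ P).Finite := V.finite_toSet.subset hVxV
  have hPVx : P = convexHull ℝ (Set.extremePoints ℝ P) := by
    conv_lhs => rw [← closure_convexHull_extremePoints hPcomp hPconv]
    exact IsClosed.closure_eq (hVxfin.isClosed_convexHull ℝ)
  set VF : Finset (EuclideanSpace ℝ (Fin d)) := hVxfin.toFinset with hVF
  have hVFcoe : (VF : Set (EuclideanSpace ℝ (Fin d))) = Set.extremePoints ℝ P :=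
    hVxfin.coe_toFinset
  -- `S` is open
  have hSopen : IsOpen S := by
    have hSeq : S = ((fun v => ⟪u, v⟫) '' Set.extremePoints ℝ P)ᶜ := by
      rw [hS]; ext β
      simp only [Set.mem_setOf_eq, Set.mem_compl_iff, Set.mem_image, not_exists, not_and]
    rw [hSeq]
    exact (Set.Finite.isClosed (hVxfin.image _)).isOpen_compl
  set C := connectedComponentIn S β₁ with hC
  have hCS : C ⊆ S := connectedComponentIn_subset S β₁
  have hβ₁C : β₁ ∈ C := mem_connectedComponentIn hβ₁
  have hβ₂C : β₂ ∈ C := hβ₂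
  have hCopen : IsOpen C := hSopen.connectedComponentIn
  have hCord : C.OrdConnected := isPreconnected_connectedComponentIn.ordConnected
  have hvalne : ∀ v ∈ Set.extremePoints ℝ P, ∀ γ ∈ C, ⟪u, v⟫ ≠ γ := by
    intro v hv γ hγ
    have := hCS hγ
    rw [hS] at this
    exact this v hv
  have hside : ∀ v ∈ Set.extremePoints ℝ P, ∀ β ∈ C, ∀ β' ∈ C,
      (⟪u, v⟫ < β ↔ ⟪u, v⟫ < β') := by
    intro v hv β hβ β' hβ'
    suffices h : ∀ γ ∈ C, ∀ δ ∈ C, ⟪u, v⟫ < γ → ⟪u, v⟫ < δ by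
      exact ⟨fun hh => h β hβ β' hβ' hh, fun hh => h β' hβ' β hβ hh⟩
    intro γ hγ δ hδ hlt
    by_contra hge
    push_neg at hge
    have hmem : ⟪u, v⟫ ∈ Set.Icc δ γ := ⟨hge, hlt.le⟩
    exact hvalne v hv _ (hCord.out hδ hγ hmem) rfl
  -- split the extreme points into those below and above the component
  set DF : Finset (EuclideanSpace ℝ (Fin d)) := VF.filter (fun v => ⟪u, v⟫ < β₁) with hDF
  set UF : Finset (EuclideanSpace ℝ (Fin d)) := VF.filter (fun v => ¬⟪u, v⟫ < β₁) with hUF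
  have hunion : DF ∪ UF = VF := Finset.filter_union_filter_not_eq _ _
  have hPDF : P = convexHull ℝ ((DF ∪ UF : Finset (EuclideanSpace ℝ (Fin d))) :
      Set (EuclideanSpace ℝ (Fin d))) := by
    rw [hunion, hVFcoe]; exact hPVx
  have hmemVx : ∀ v ∈ VF, v ∈ Set.extremePoints ℝ P := by
    intro v hv
    rw [← hVFcoe]; exact hv
  -- pick interior levels
  obtain ⟨ε₁, hε₁, hball₁⟩ := Metric.isOpen_iff.1 hCopen β₁ hβ₁C
  obtain ⟨ε₂, hε₂, hball₂⟩ := Metric.isOpen_iff.1 hCopen β₂ hβ₂C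
  set β₀ : ℝ := min (β₁ - ε₁ / 2) (β₂ - ε₂ / 2) with hβ₀
  set β₃ : ℝ := max (β₁ + ε₁ / 2) (β₂ + ε₂ / 2) with hβ₃
  have hβ₀C : β₀ ∈ C := by
    rcases min_cases (β₁ - ε₁ / 2) (β₂ - ε₂ / 2) with ⟨he, -⟩ | ⟨he, -⟩ <;> rw [hβ₀, he]
    · exact hball₁ (by
        rw [Metric.mem_ball, Real.dist_eq, show β₁ - ε₁ / 2 - β₁ = -(ε₁ / 2) by ring, abs_neg,
          abs_of_pos (by linarith)]
        linarith)
    · exact hball₂ (by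
        rw [Metric.mem_ball, Real.dist_eq, show β₂ - ε₂ / 2 - β₂ = -(ε₂ / 2) by ring, abs_neg,
          abs_of_pos (by linarith)]
        linarith)
  have hβ₃C : β₃ ∈ C := by
    rcases max_cases (β₁ + ε₁ / 2) (β₂ + ε₂ / 2) with ⟨he, -⟩ | ⟨he, -⟩ <;> rw [hβ₃, he]
    · exact hball₁ (by
        rw [Metric.mem_ball, Real.dist_eq, show β₁ + ε₁ / 2 - β₁ = ε₁ / 2 by ring,
          abs_of_pos (by linarith)]
        linarith)
    · exact hball₂ (by
        rw [Metric.mem_ball, Real.dist_eq, show β₂ + ε₂ / 2 - β₂ = ε₂ / 2 by ring,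
          abs_of_pos (by linarith)]
        linarith)
  have hβ₀1 : β₀ < β₁ := lt_of_le_of_lt (min_le_left _ _) (by linarith)
  have hβ₀2 : β₀ < β₂ := lt_of_le_of_lt (min_le_right _ _) (by linarith)
  have hβ₁3 : β₁ < β₃ := lt_of_lt_of_le (by linarith) (le_max_left _ _)
  have hβ₂3 : β₂ < β₃ := lt_of_lt_of_le (by linarith) (le_max_right _ _)
  have h03 : β₀ ≤ β₃ := by linarith
  -- separation of the two vertex classes
  have hD : ∀ v ∈ DF, ⟪u, v⟫ < β₀ := by
    intro v hv
    obtain ⟨hvVF, hvlt⟩ := Finset.mem_filter.1 hv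
    exact (hside v (hmemVx v hvVF) β₀ hβ₀C β₁ hβ₁C).2 hvlt
  have hU : ∀ v ∈ UF, β₃ < ⟪u, v⟫ := by
    intro v hv
    obtain ⟨hvVF, hvnlt⟩ := Finset.mem_filter.1 hv
    have h1 : ¬⟪u, v⟫ < β₃ := fun hh =>
      hvnlt ((hside v (hmemVx v hvVF) β₃ hβ₃C β₁ hβ₁C).1 hh)
    push_neg at h1
    exact h1.lt_of_ne (Ne.symm (hvalne v (hmemVx v hvVF) β₃ hβ₃C))
  -- the two classes are both nonempty
  have hlinu : IsLinearMap ℝ (fun z : EuclideanSpace ℝ (Fin d) => ⟪u, z⟫) :=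
    ⟨fun x y => inner_add_right u x y, fun c x => by rw [real_inner_smul_right, smul_eq_mul]⟩
  have hDne : DF.Nonempty := by
    obtain ⟨x, hx⟩ := hne₁
    rw [hQ₁] at hx
    obtain ⟨hxP, hxβ⟩ := hx
    have hxβ' : ⟪u, x⟫ = β₁ := hxβ
    by_contra hemp
    rw [Finset.not_nonempty_iff_eq_empty] at hemp
    have hsubU : ((DF ∪ UF : Finset (EuclideanSpace ℝ (Fin d))) :
        Set (EuclideanSpace ℝ (Fin d))) ⊆ {z | β₁ < ⟪u, z⟫} := by
      intro v hv
      rw [Finset.coe_union, Set.mem_union] at hv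
      rcases hv with hv | hv
      · rw [hemp] at hv; simp at hv
      · have := hU v (by exact_mod_cast hv)
        simp only [Set.mem_setOf_eq]
        linarith
    have hPsub := convexHull_min hsubU (convex_halfSpace_gt hlinu β₁)
    rw [← hPDF] at hPsub
    have := hPsub hxP
    simp only [Set.mem_setOf_eq] at this
    linarith [hxβ' ▸ this]
  have hUne : UF.Nonempty := by
    obtain ⟨x, hx⟩ := hne₁
    rw [hQ₁] at hx
    obtain ⟨hxP, hxβ⟩ := hx
    have hxβ' : ⟪u, x⟫ = β₁ := hxβ
    by_contra hemp
    rw [Finset.not_nonempty_iff_eq_empty] at hemp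
    have hsubD : ((DF ∪ UF : Finset (EuclideanSpace ℝ (Fin d))) :
        Set (EuclideanSpace ℝ (Fin d))) ⊆ {z | ⟪u, z⟫ < β₁} := by
      intro v hv
      rw [Finset.coe_union, Set.mem_union] at hv
      rcases hv with hv | hv
      · have := hD v (by exact_mod_cast hv)
        simp only [Set.mem_setOf_eq]
        linarith
      · rw [hemp] at hv; simp at hv
    have hPsub := convexHull_min hsubD (convex_halfSpace_lt hlinu β₁)
    rw [← hPDF] at hPsub
    have := hPsub hxP
    simp only [Set.mem_setOf_eq] at this
    linarith [hxβ' ▸ this]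
  have hneP : (DF ×ˢ UF).Nonempty := hDne.product hUne
  -- barycentric coordinates of β₁ and β₂ in [β₀, β₃]
  have hδ : (0 : ℝ) < β₃ - β₀ := by linarith
  set sa : ℝ := (β₃ - β₁) / (β₃ - β₀) with hsadef
  set ta : ℝ := (β₁ - β₀) / (β₃ - β₀) with htadef
  set sb : ℝ := (β₃ - β₂) / (β₃ - β₀) with hsbdef
  set tb : ℝ := (β₂ - β₀) / (β₃ - β₀) with htbdef
  have hsa : 0 < sa := div_pos (by linarith) hδ
  have hta : 0 < ta := div_pos (by linarith) hδ
  have hsb : 0 < sb := div_pos (by linarith) hδ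
  have htb : 0 < tb := div_pos (by linarith) hδ
  have hδ' : β₃ - β₀ ≠ 0 := ne_of_gt hδ
  have hsta : sa + ta = 1 := by
    rw [hsadef, htadef, ← add_div, show β₃ - β₁ + (β₁ - β₀) = β₃ - β₀ by ring]
    exact div_self hδ'
  have hstb : sb + tb = 1 := by
    rw [hsbdef, htbdef, ← add_div, show β₃ - β₂ + (β₂ - β₀) = β₃ - β₀ by ring]
    exact div_self hδ'
  have hea : sa * β₀ + ta * β₃ = β₁ := by
    rw [hsadef, htadef]
    field_simp
    ring
  have heb : sb * β₀ + tb * β₃ = β₂ := by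
    rw [hsbdef, htbdef]
    field_simp
    ring
  -- now transfer the face equality from one level to the other
  rw [hQ₁, hQ₂, hPDF]
  simp only [argmaxFace_eq_faceSet]
  constructor
  · intro h
    have h' : faceSet (convexHull ℝ ((DF ∪ UF : Finset (EuclideanSpace ℝ (Fin d))) :
          Set (EuclideanSpace ℝ (Fin d))) ∩ {z | ⟪u, z⟫ = sa * β₀ + ta * β₃}) w₁
        = faceSet (convexHull ℝ ((DF ∪ UF : Finset (EuclideanSpace ℝ (Fin d))) :
          Set (EuclideanSpace ℝ (Fin d))) ∩ {z | ⟪u, z⟫ = sa * β₀ + ta * β₃}) w₂ := by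
      rw [hea]; exact h
    have o₁ := oneDir u DF UF hneP hD hU h03 hsa hta hsta hsb htb hstb w₁ w₂ h'
    have o₂ := oneDir u DF UF hneP hD hU h03 hsa hta hsta hsb htb hstb w₂ w₁ h'.symm
    rw [heb] at o₁ o₂
    exact Set.Subset.antisymm o₁ o₂
  · intro h
    have h' : faceSet (convexHull ℝ ((DF ∪ UF : Finset (EuclideanSpace ℝ (Fin d))) :
          Set (EuclideanSpace ℝ (Fin d))) ∩ {z | ⟪u, z⟫ = sb * β₀ + tb * β₃}) w₁
        = faceSet (convexHull ℝ ((DF ∪ UF : Finset (EuclideanSpace ℝ (Fin d))) :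
          Set (EuclideanSpace ℝ (Fin d))) ∩ {z | ⟪u, z⟫ = sb * β₀ + tb * β₃}) w₂ := by
      rw [heb]; exact h
    have o₁ := oneDir u DF UF hneP hD hU h03 hsb htb hstb hsa hta hsta w₁ w₂ h'
    have o₂ := oneDir u DF UF hneP hD hU h03 hsb htb hstb hsa hta hsta w₂ w₁ h'.symm
    rw [hea] at o₁ o₂
    exact Set.Subset.antisymm o₁ o₂
end

section
/- An arrangement of m hyperplanes in ℝᵈ has at most Σ_{i=0}^{d} C(m,i) connected components in its complement (i.e., at most Σ_{i=0}^{d} C(m,i) full-dimensional open regions). -/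
open Module Finset

lemma pascal_sum (m d : ℕ) :
    ∑ i ∈ range (d+1), (m+1).choose i
      = ∑ i ∈ range (d+1), m.choose i + ∑ i ∈ range d, m.choose i := by
  induction d with
  | zero => simp
  | succ e ih =>
    rw [sum_range_succ, ih, sum_range_succ (f := fun i => m.choose i),
      Nat.choose_succ_succ]
    rw [show e+1+1 = (e+1)+1 from rfl, sum_range_succ (f := fun i => m.choose i) (n := e+1),
      sum_range_succ (f := fun i => m.choose i) (n := e)]
    simp only [Nat.succ_eq_add_one]
    omega

/-- zero point on a segment with sign preservation -/
lemma seg_zero {V : Type} [AddCommGroup V] [Module ℝ V] (g : V →ᵃ[ℝ] ℝ) (x y : V)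
    (hx : 0 < g x) (hy : g y < 0) :
    ∃ z : V, g z = 0 ∧ ∀ h : V →ᵃ[ℝ] ℝ,
      (0 < h x → 0 < h y → 0 < h z) ∧ (h x < 0 → h y < 0 → h z < 0) := by
  set t : ℝ := g x / (g x - g y) with ht
  have hd : g x - g y ≠ 0 := by linarith
  have ht0 : 0 < t := div_pos hx (by linarith)
  have ht1 : t < 1 := by
    rw [ht, div_lt_one (by linarith)]; linarith
  have key : ∀ h : V →ᵃ[ℝ] ℝ, h (AffineMap.lineMap x y t) = h x + t * (h y - h x) := by
    intro h; rw [AffineMap.apply_lineMap]; simp [AffineMap.lineMap_apply]; ring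
  refine ⟨AffineMap.lineMap x y t, ?_, fun h => ⟨fun h1 h2 => ?_, fun h1 h2 => ?_⟩⟩
  · rw [key, ht]; field_simp; ring
  · rw [key]; nlinarith
  · rw [key]; nlinarith

lemma signs_le (m : ℕ) : ∀ (d : ℕ) (V : Type) [AddCommGroup V] [Module ℝ V]
    [FiniteDimensional ℝ V], finrank ℝ V ≤ d → ∀ f : Fin m → (V →ᵃ[ℝ] ℝ),
    {σ : Fin m → Bool | ∃ x : V, ∀ i, if σ i = true then 0 < f i x else f i x < 0}.ncard
      ≤ ∑ i ∈ range (d+1), m.choose i := by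
  induction m with
  | zero =>
    intro d V _ _ _ hd f
    have h1 : {σ : Fin 0 → Bool | ∃ x : V, ∀ i, if σ i = true then 0 < f i x else f i x < 0}.ncard
        ≤ (Set.univ : Set (Fin 0 → Bool)).ncard :=
      Set.ncard_le_ncard (Set.subset_univ _) Set.finite_univ
    have h2 : (Set.univ : Set (Fin 0 → Bool)).ncard = 1 := by
      rw [Set.ncard_univ, Nat.card_eq_fintype_card]
      simp
    have h3 : 1 ≤ ∑ i ∈ range (d+1), Nat.choose 0 i := by
      calc 1 = Nat.choose 0 0 := rfl
        _ ≤ _ := Finset.single_le_sum (f := fun i => Nat.choose 0 i)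
          (fun i _ => Nat.zero_le _) (Finset.mem_range.2 (Nat.succ_pos d))
    exact le_trans (le_trans h1 h2.le) h3
  | succ m IH =>
    intro d V _ _ _ hd f
    classical
    set A := {σ : Fin (m+1) → Bool | ∃ x : V, ∀ i, if σ i = true then 0 < f i x else f i x < 0}
      with hA
    set f' : Fin m → (V →ᵃ[ℝ] ℝ) := fun i => f i.castSucc with hf'
    set A' := {τ : Fin m → Bool | ∃ x : V, ∀ i, if τ i = true then 0 < f' i x else f' i x < 0}
      with hA'
    set ρ : (Fin (m+1) → Bool) → (Fin m → Bool) := fun σ => σ ∘ Fin.castSucc with hρ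
    set Et := {σ | σ ∈ A ∧ σ (Fin.last m) = true} with hEt
    set Ef := {σ | σ ∈ A ∧ σ (Fin.last m) = false} with hEf
    set T := {τ : Fin m → Bool | ∃ y : V, f (Fin.last m) y = 0 ∧
      ∀ i, if τ i = true then 0 < f' i y else f' i y < 0} with hT
    have h_union : A = Et ∪ Ef := by
      ext σ
      simp only [hEt, hEf, Set.mem_union, Set.mem_setOf_eq]
      cases h : σ (Fin.last m) <;> tauto
    have h_disj : Disjoint Et Ef := by
      rw [Set.disjoint_left]
      rintro σ ⟨-, h1⟩ ⟨-, h2⟩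
      rw [h1] at h2; exact Bool.noConfusion h2
    have hinj : ∀ b : Bool, Set.InjOn ρ {σ | σ ∈ A ∧ σ (Fin.last m) = b} := by
      intro b σ1 h1 σ2 h2 hρeq
      funext i
      refine Fin.lastCases ?_ ?_ i
      · rw [h1.2, h2.2]
      · intro j
        exact congrFun hρeq j
    have himg : ∀ b : Bool, ρ '' {σ | σ ∈ A ∧ σ (Fin.last m) = b} ⊆ A' := by
      rintro b τ ⟨σ, ⟨⟨x, hx⟩, -⟩, rfl⟩
      exact ⟨x, fun i => hx i.castSucc⟩
    have hint : ρ '' Et ∩ ρ '' Ef ⊆ T := by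
      rintro τ ⟨⟨σp, ⟨⟨xp, hxp⟩, hlp⟩, rfl⟩, ⟨σn, ⟨⟨xn, hxn⟩, hln⟩, hρeq⟩⟩
      have hp : 0 < f (Fin.last m) xp := by
        have := hxp (Fin.last m); rw [hlp] at this; simpa using this
      have hn : f (Fin.last m) xn < 0 := by
        have := hxn (Fin.last m); rw [hln] at this; simpa using this
      obtain ⟨z, hz0, hz⟩ := seg_zero (f (Fin.last m)) xp xn hp hn
      refine ⟨z, hz0, fun i => ?_⟩
      have e1 : σp i.castSucc = σn i.castSucc := (congrFun hρeq i).symm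
      have h1 := hxp i.castSucc
      have h2 := hxn i.castSucc
      rw [← e1] at h2
      show if σp i.castSucc = true then _ else _
      cases h : σp i.castSucc with
      | true =>
        rw [h] at h1 h2; simp only [if_pos rfl] at h1 h2 ⊢
        exact (hz (f' i)).1 h1 h2
      | false =>
        rw [h] at h1 h2
        rw [if_neg (by simp)] at h1
        rw [if_neg (by simp)] at h2
        rw [if_neg (by simp)]
        exact (hz (f' i)).2 h1 h2
    have hIcard : (ρ '' Et ∩ ρ '' Ef).ncard ≤ ∑ i ∈ range d, m.choose i := by
      by_cases hL : (f (Fin.last m)).linear = 0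
      · have hempty : ρ '' Et ∩ ρ '' Ef = ∅ := by
          rw [Set.eq_empty_iff_forall_notMem]
          rintro τ ⟨⟨σp, ⟨⟨xp, hxp⟩, hlp⟩, rfl⟩, ⟨σn, ⟨⟨xn, hxn⟩, hln⟩, hρeq⟩⟩
          have hp : 0 < f (Fin.last m) xp := by
            have := hxp (Fin.last m); rw [hlp] at this; simpa using this
          have hn : f (Fin.last m) xn < 0 := by
            have := hxn (Fin.last m); rw [hln] at this; simpa using this
          have e1 : f (Fin.last m) xp = (f (Fin.last m)).linear xp + f (Fin.last m) 0 := by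
            conv_lhs => rw [AffineMap.decomp (f (Fin.last m))]
            simp
          have e2 : f (Fin.last m) xn = (f (Fin.last m)).linear xn + f (Fin.last m) 0 := by
            conv_lhs => rw [AffineMap.decomp (f (Fin.last m))]
            simp
          rw [hL] at e1 e2
          simp at e1 e2
          rw [e1] at hp; rw [e2] at hn; linarith
        rw [hempty]
        simp
      · obtain ⟨v, hv⟩ : ∃ v : V, (f (Fin.last m)).linear v ≠ 0 := by
          by_contra hc
          push_neg at hc
          exact hL (LinearMap.ext fun w => by rw [hc w]; rfl)
        have hvne : v ≠ 0 := fun h => hv (by rw [h, map_zero])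
        have : Nontrivial V := nontrivial_of_ne v 0 hvne
        have hfr : 1 ≤ finrank ℝ V := finrank_pos
        obtain ⟨e, rfl⟩ : ∃ e, d = e + 1 := by
          cases d with
          | zero => omega
          | succ e => exact ⟨e, rfl⟩
        set L := (f (Fin.last m)).linear with hLdef
        set c := f (Fin.last m) 0 with hc
        have hdecomp : ∀ x : V, f (Fin.last m) x = L x + c := by
          intro x
          conv_lhs => rw [AffineMap.decomp (f (Fin.last m))]
          simp [hLdef, hc]
        set x0 : V := (-c / L v) • v with hx0def
        have hx0 : f (Fin.last m) x0 = 0 := by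
          rw [hdecomp, hx0def, map_smul]
          simp only [smul_eq_mul]
          field_simp
          ring
        set W := LinearMap.ker L with hW
        have hLW : ∀ w : W, L ↑w = 0 := fun w => w.2
        set ι : W →ᵃ[ℝ] V :=
          { toFun := fun w => x0 + ↑w
            linear := W.subtype
            map_vadd' := by
              intro p w
              show x0 + ↑(w + p) = ↑w + (x0 + ↑p)
              push_cast
              abel } with hι
        set g : Fin m → (W →ᵃ[ℝ] ℝ) := fun i => (f' i).comp ι with hg
        have hrange : LinearMap.range L = ⊤ := by
          rw [LinearMap.range_eq_top]
          intro r
          exact ⟨(r / L v) • v, by rw [map_smul]; simp; field_simp⟩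
        have hrank : finrank ℝ W ≤ e := by
          have h1 := LinearMap.finrank_range_add_finrank_ker L
          rw [hrange] at h1
          rw [finrank_top, finrank_self] at h1
          rw [hW]
          omega
        have hTsub : T ⊆ {τ : Fin m → Bool |
            ∃ w : W, ∀ i, if τ i = true then 0 < g i w else g i w < 0} := by
          rintro τ ⟨y, hy0, hy⟩
          have hymem : y - x0 ∈ W := by
            rw [hW, LinearMap.mem_ker, map_sub]
            have h1 : L y + c = 0 := by rw [← hdecomp]; exact hy0
            have h2 : L x0 + c = 0 := by rw [← hdecomp]; exact hx0
            linarith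
          refine ⟨⟨y - x0, hymem⟩, fun i => ?_⟩
          have : g i ⟨y - x0, hymem⟩ = f' i y := by
            show f' i (x0 + (y - x0)) = f' i y
            congr 1
            abel
          rw [this]
          exact hy i
        calc (ρ '' Et ∩ ρ '' Ef).ncard ≤ T.ncard := Set.ncard_le_ncard hint (Set.toFinite _)
          _ ≤ _ := Set.ncard_le_ncard hTsub (Set.toFinite _)
          _ ≤ ∑ i ∈ range (e+1), m.choose i := IH (e) W hrank g
    have hAcard : A.ncard = Et.ncard + Ef.ncard := by
      rw [h_union]
      exact Set.ncard_union_eq h_disj (Set.toFinite _) (Set.toFinite _)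
    have hEtc : Et.ncard = (ρ '' Et).ncard := (Set.ncard_image_of_injOn (hinj true)).symm
    have hEfc : Ef.ncard = (ρ '' Ef).ncard := (Set.ncard_image_of_injOn (hinj false)).symm
    have hsum : (ρ '' Et ∪ ρ '' Ef).ncard + (ρ '' Et ∩ ρ '' Ef).ncard
        = (ρ '' Et).ncard + (ρ '' Ef).ncard :=
      Set.ncard_union_add_ncard_inter _ _ (Set.toFinite _) (Set.toFinite _)
    have hU : (ρ '' Et ∪ ρ '' Ef).ncard ≤ A'.ncard :=
      Set.ncard_le_ncard (Set.union_subset (himg true) (himg false)) (Set.toFinite _)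
    have hA'card : A'.ncard ≤ ∑ i ∈ range (d+1), m.choose i := IH d V hd f'
    rw [pascal_sum]
    omega

open RealInnerProductSpace

/-- An arrangement of `m` affine hyperplanes in `ℝᵈ` has at most `Σ_{i=0}^{d} C(m,i)`
connected components in its complement. -/
theorem card_regions_le {d m : ℕ} (a : Fin m → EuclideanSpace ℝ (Fin d))
    (b : Fin m → ℝ) (ha : ∀ i, a i ≠ 0)
    (S : Set (EuclideanSpace ℝ (Fin d))) (hS : S = {x | ∀ i, ⟪a i, x⟫ ≠ b i}) :
    {C : Set (EuclideanSpace ℝ (Fin d)) |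
        ∃ x ∈ S, C = connectedComponentIn S x}.ncard ≤
      ∑ i ∈ Finset.range (d + 1), m.choose i := by
  classical
  have hlin : ∀ i, IsLinearMap ℝ (fun x : EuclideanSpace ℝ (Fin d) => ⟪a i, x⟫) := fun i =>
    ⟨fun x y => inner_add_right _ _ _, fun c x => real_inner_smul_right _ _ _⟩
  set F : Fin m → (EuclideanSpace ℝ (Fin d) →ᵃ[ℝ] ℝ) := fun i =>
    { toFun := fun x => ⟪a i, x⟫ - b i
      linear := (hlin i).mk' _
      map_vadd' := by
        intro p v
        show ⟪a i, v + p⟫ - b i = ⟪a i, v⟫ + (⟪a i, p⟫ - b i)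
        rw [inner_add_right]; ring } with hF
  set sgn : EuclideanSpace ℝ (Fin d) → (Fin m → Bool) := fun x i => decide (b i < ⟪a i, x⟫) with hsgn
  set P : (Fin m → Bool) → Set (EuclideanSpace ℝ (Fin d)) := fun σ =>
    {x | ∀ i, if σ i = true then b i < ⟪a i, x⟫ else ⟪a i, x⟫ < b i} with hP
  have hmemP : ∀ x ∈ S, x ∈ P (sgn x) := by
    intro x hx i
    rw [hS] at hx
    by_cases h : b i < ⟪a i, x⟫
    · rw [if_pos (by simpa [hsgn] using h)]; exact h
    · rw [if_neg (by simpa [hsgn] using h)]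
      exact lt_of_le_of_ne (not_lt.1 h) (hx i)
  have hPS : ∀ σ, P σ ⊆ S := by
    intro σ x hx
    rw [hS]
    intro i
    have := hx i
    cases h : σ i
    · rw [h, if_neg (by simp)] at this; exact ne_of_lt this
    · rw [h, if_pos rfl] at this; exact ne_of_gt this
  have hcont : ∀ i, Continuous (fun x : EuclideanSpace ℝ (Fin d) => ⟪a i, x⟫) := fun i =>
    continuous_const.inner continuous_id
  have hPopen : ∀ σ, IsOpen (P σ) := by
    intro σ
    have : P σ = ⋂ i, {x : EuclideanSpace ℝ (Fin d) | if σ i = true then b i < ⟪a i, x⟫ else ⟪a i, x⟫ < b i} := by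
      ext x; simp [hP, Set.mem_iInter]
    rw [this]
    refine isOpen_iInter_of_finite fun i => ?_
    cases h : σ i
    · simp only [h, Bool.false_eq_true, if_false]
      exact isOpen_lt (hcont i) continuous_const
    · simp only [h, if_true]
      exact isOpen_lt continuous_const (hcont i)
  have hPconv : ∀ σ, Convex ℝ (P σ) := by
    intro σ
    have : P σ = ⋂ i, {x : EuclideanSpace ℝ (Fin d) | if σ i = true then b i < ⟪a i, x⟫ else ⟪a i, x⟫ < b i} := by
      ext x; simp [hP, Set.mem_iInter]
    rw [this]
    refine convex_iInter fun i => ?_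
    cases h : σ i
    · simp only [h, Bool.false_eq_true, if_false]
      exact convex_halfSpace_lt (hlin i) (b i)
    · simp only [h, if_true]
      exact convex_halfSpace_gt (hlin i) (b i)
  have hdisj : ∀ σ τ, σ ≠ τ → Disjoint (P σ) (P τ) := by
    intro σ τ hne
    rw [Set.disjoint_left]
    intro x hxσ hxτ
    obtain ⟨i, hi⟩ := Function.ne_iff.1 hne
    have h1 := hxσ i
    have h2 := hxτ i
    cases hσ : σ i <;> cases hτ : τ i
    · rw [hσ] at hi; rw [hτ] at hi; exact hi rfl
    · rw [hσ, if_neg (by simp)] at h1; rw [hτ, if_pos rfl] at h2; linarith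
    · rw [hσ, if_pos rfl] at h1; rw [hτ, if_neg (by simp)] at h2; linarith
    · rw [hσ] at hi; rw [hτ] at hi; exact hi rfl
  have hcomp : ∀ x ∈ S, connectedComponentIn S x = P (sgn x) := by
    intro x hx
    apply Set.Subset.antisymm
    · set Wo : Set (EuclideanSpace ℝ (Fin d)) := ⋃ τ ∈ {τ : Fin m → Bool | τ ≠ sgn x}, P τ with hWo
      have hWoopen : IsOpen Wo := isOpen_biUnion fun τ _ => hPopen τ
      have hSsub : S ⊆ P (sgn x) ∪ Wo := by
        intro y hy
        by_cases h : sgn y = sgn x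
        · left; rw [← h]; exact hmemP y hy
        · right; exact Set.mem_biUnion h (hmemP y hy)
      have hdisj2 : Disjoint (P (sgn x)) Wo := by
        rw [Set.disjoint_left]
        intro y hy1 hy2
        obtain ⟨τ, hτ, hyτ⟩ := Set.mem_iUnion₂.1 hy2
        exact Set.disjoint_left.1 (hdisj (sgn x) τ (Ne.symm hτ)) hy1 hyτ
      refine IsPreconnected.subset_left_of_subset_union (hPopen (sgn x)) hWoopen hdisj2
        ((connectedComponentIn_subset S x).trans hSsub)
        ⟨x, mem_connectedComponentIn hx, hmemP x hx⟩
        (isPreconnected_connectedComponentIn)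
    · exact (hPconv (sgn x)).isPreconnected.subset_connectedComponentIn
        (hmemP x hx) (hPS (sgn x))
  set Φ : Set (EuclideanSpace ℝ (Fin d)) → (Fin m → Bool) := fun C i => decide (∃ y ∈ C, b i < ⟪a i, y⟫) with hΦ
  have hΦP : ∀ σ, ∀ x ∈ P σ, Φ (P σ) = σ := by
    intro σ x hx
    funext i
    cases h : σ i
    · apply decide_eq_false
      rintro ⟨y, hy, hlt⟩
      have := hy i
      rw [h, if_neg (by simp)] at this
      linarith
    · apply decide_eq_true
      have := hx i
      rw [h, if_pos rfl] at this
      exact ⟨x, hx, this⟩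
  have key := signs_le m d (EuclideanSpace ℝ (Fin d)) (le_of_eq finrank_euclideanSpace_fin) F
  refine le_trans (Set.ncard_le_ncard_of_injOn Φ ?_ ?_ (Set.toFinite _)) key
  · rintro C ⟨x, hx, rfl⟩
    rw [hcomp x hx, hΦP (sgn x) x (hmemP x hx)]
    refine ⟨x, fun i => ?_⟩
    have hxP := hmemP x hx i
    cases h : sgn x i
    · rw [h, if_neg (by simp)] at hxP
      rw [if_neg (by simp)]
      show ⟪a i, x⟫ - b i < 0
      linarith
    · rw [h, if_pos rfl] at hxP
      rw [if_pos rfl]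
      show 0 < ⟪a i, x⟫ - b i
      linarith
  · rintro C1 ⟨x1, hx1, rfl⟩ C2 ⟨x2, hx2, rfl⟩ heq
    rw [hcomp x1 hx1, hcomp x2 hx2] at heq ⊢
    rw [hΦP (sgn x1) x1 (hmemP x1 hx1), hΦP (sgn x2) x2 (hmemP x2 hx2)] at heq
    rw [heq]
end

section
/- Let P ⊂ ℝᵈ be a full-dimensional polytope with n vertices. The number of distinct combinatorial types of polytopes arising as intersections P ∩ H over all affine hyperplanes H ⊂ ℝᵈ is at most C·n^{2d+1}·2^d for some constant C depending only on d; in particular, for fixed d it is bounded by a polynomial in n. -/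
open RealInnerProductSpace

/-- Two sets are combinatorially equivalent if their posets of faces (extreme subsets,
ordered by inclusion) are order-isomorphic. -/
def CombEquiv {d : ℕ} (Q₁ Q₂ : Set (EuclideanSpace ℝ (Fin d))) : Prop :=
  Nonempty ({F : Set (EuclideanSpace ℝ (Fin d)) // IsExtreme ℝ Q₁ F} ≃o
    {F : Set (EuclideanSpace ℝ (Fin d)) // IsExtreme ℝ Q₂ F})


section MinExt
variable {E : Type*} [AddCommGroup E] [Module ℝ E]

/-- The minimal extreme subset of `A` containing `x` (when `x ∈ A` and `A` convex). -/
def minExt (A : Set E) (x : E) : Set E :=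
  {y | y ∈ A ∧ ∃ z ∈ A, ∃ a b : ℝ, 0 < a ∧ 0 < b ∧ a + b = 1 ∧ a • y + b • z = x}

lemma minExt_subset {A : Set E} {x : E} : minExt A x ⊆ A := fun _ hy => hy.1

lemma mem_minExt_self {A : Set E} {x : E} (hx : x ∈ A) : x ∈ minExt A x := by
  refine ⟨hx, x, hx, 1/2, 1/2, by norm_num, by norm_num, by norm_num, ?_⟩
  rw [← add_smul]; norm_num

lemma minExt_mem_openSegment {A : Set E} {x y : E} (hy : y ∈ minExt A x) :
    ∃ z ∈ A, x ∈ openSegment ℝ y z := by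
  obtain ⟨hyA, z, hz, a, b, ha, hb, hab, heq⟩ := hy
  exact ⟨z, hz, a, b, ha, hb, hab, heq⟩

lemma isExtreme_minExt {A : Set E} (hA : Convex ℝ A) (x : E) : IsExtreme ℝ A (minExt A x) := by
  constructor
  · exact minExt_subset
  · rintro y₁ hy₁ y₂ hy₂ y ⟨hyA, z, hzA, a, b, ha, hb, hab, heq⟩ ⟨c, e, hc, he, hce, hseg⟩
    have ha1 : a < 1 := by linarith
    have hc1 : c < 1 := by linarith
    have he1 : e < 1 := by linarith
    -- generic claim: if y = c•y₁ + e•y₂ then y₁ ∈ minExt A x (and symmetric for y₂)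
    have key : ∀ (w₁ w₂ : E) (c e : ℝ), 0 < c → 0 < e → c + e = 1 → w₁ ∈ A → w₂ ∈ A →
        c • w₁ + e • w₂ = y → w₁ ∈ minExt A x := by
      intro w₁ w₂ c e hc he hce hw₁ hw₂ hseg
      have hc1 : c < 1 := by linarith
      have hac : 0 < a * c := by positivity
      have hac1 : a * c < 1 := by nlinarith
      have hμ : (0:ℝ) < 1 - a * c := by linarith
      refine ⟨hw₁, (a * e / (1 - a * c)) • w₂ + (b / (1 - a * c)) • z, ?_, a * c, 1 - a * c,
        hac, hμ, by ring, ?_⟩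
      · refine hA hw₂ hzA (by positivity) (by positivity) ?_
        field_simp
        linear_combination a * hce + hab
      · have h1 : (1 - a * c) • ((a * e / (1 - a * c)) • w₂ + (b / (1 - a * c)) • z)
            = (a * e) • w₂ + b • z := by
          rw [smul_add, smul_smul, smul_smul]
          rw [mul_div_cancel₀ _ (ne_of_gt hμ), mul_div_cancel₀ _ (ne_of_gt hμ)]
        rw [h1, ← heq, ← hseg]
        module
    exact key y₁ y₂ c e hc he hce hy₁ hy₂ hseg

lemma minExt_min {A F : Set E} {x : E} (hF : IsExtreme ℝ A F) (hx : x ∈ F) :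
    minExt A x ⊆ F := by
  rintro y ⟨hyA, z, hzA, a, b, ha, hb, hab, heq⟩
  exact hF.2 hyA hzA hx ⟨a, b, ha, hb, hab, heq⟩

lemma minExt_trans {A : Set E} {x y : E} (hA : Convex ℝ A) (hy : y ∈ minExt A x) :
    minExt A y ⊆ minExt A x :=
  minExt_min (isExtreme_minExt hA x) hy

/-- Characterization of extreme subsets via minimal extreme sets. -/
lemma isExtreme_iff_minExt {A F : Set E} :
    IsExtreme ℝ A F ↔ F ⊆ A ∧ ∀ x ∈ F, minExt A x ⊆ F := by
  constructor
  · intro hF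
    refine ⟨hF.1, fun x hx => minExt_min hF hx⟩
  · rintro ⟨h1, h2⟩
    refine ⟨h1, ?_⟩
    rintro x₁ hx₁ x₂ hx₂ x hx ⟨a, b, ha, hb, hab, heq⟩
    exact h2 x hx ⟨hx₁, x₂, hx₂, a, b, ha, hb, hab, heq⟩

/-- Every point of a polytope lies in the convex hull of the vertices inside its
minimal extreme set. -/
lemma mem_convexHull_inter_minExt (V : Set E) {z : E} (hz : z ∈ convexHull ℝ V) :
    z ∈ convexHull ℝ (V ∩ minExt (convexHull ℝ V) z) := by
  set P := convexHull ℝ V with hP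
  have hPc : Convex ℝ P := convex_convexHull ℝ V
  set U : Set E := {w | w ∈ P ∧ w ∈ convexHull ℝ (V ∩ minExt P w)} with hU
  have hVU : V ⊆ U := by
    intro v hv
    have hvP : v ∈ P := subset_convexHull ℝ V hv
    exact ⟨hvP, subset_convexHull ℝ _ ⟨hv, mem_minExt_self hvP⟩⟩
  have hUc : Convex ℝ U := by
    rintro z₁ ⟨hz₁P, hz₁⟩ z₂ ⟨hz₂P, hz₂⟩ t₁ t₂ ht₁ ht₂ hsum
    rcases eq_or_lt_of_le ht₁ with h1 | h1
    · have : t₂ = 1 := by linarith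
      simp [← h1, this]
      exact ⟨hz₂P, hz₂⟩
    rcases eq_or_lt_of_le ht₂ with h2 | h2
    · have : t₁ = 1 := by linarith
      simp [← h2, this]
      exact ⟨hz₁P, hz₁⟩
    set w := t₁ • z₁ + t₂ • z₂ with hw
    have hwP : w ∈ P := hPc hz₁P hz₂P ht₁ ht₂ hsum
    have hm₁ : z₁ ∈ minExt P w := ⟨hz₁P, z₂, hz₂P, t₁, t₂, h1, h2, hsum, rfl⟩
    have hm₂ : z₂ ∈ minExt P w := ⟨hz₂P, z₁, hz₁P, t₂, t₁, h2, h1, by linarith, by rw [add_comm]⟩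
    have hs₁ : convexHull ℝ (V ∩ minExt P z₁) ⊆ convexHull ℝ (V ∩ minExt P w) :=
      convexHull_mono (Set.inter_subset_inter_right _ (minExt_trans hPc hm₁))
    have hs₂ : convexHull ℝ (V ∩ minExt P z₂) ⊆ convexHull ℝ (V ∩ minExt P w) :=
      convexHull_mono (Set.inter_subset_inter_right _ (minExt_trans hPc hm₂))
    exact ⟨hwP, (convex_convexHull ℝ _) (hs₁ hz₁) (hs₂ hz₂) ht₁ ht₂ hsum⟩
  have : P ⊆ U := convexHull_min hVU hUc
  exact (this hz).2

end MinExt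

section Hyper
variable {E : Type*} [AddCommGroup E] [Module ℝ E]

lemma minExt_inter_hyper {A : Set E} (ℓ : E →ₗ[ℝ] ℝ) (β : ℝ) {x : E} (hx : ℓ x = β) :
    minExt (A ∩ {w | ℓ w = β}) x = minExt A x ∩ {w | ℓ w = β} := by
  ext y
  constructor
  · rintro ⟨⟨hyA, hyH⟩, z, ⟨hzA, _⟩, a, b, ha, hb, hab, heq⟩
    exact ⟨⟨hyA, z, hzA, a, b, ha, hb, hab, heq⟩, hyH⟩
  · rintro ⟨⟨hyA, z, hzA, a, b, ha, hb, hab, heq⟩, hyH⟩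
    have hz : ℓ z = β := by
      have h1 : a * ℓ y + b * ℓ z = β := by
        rw [← hx, ← heq]; simp
      have : b * ℓ z = b * β := by
        rw [hyH] at h1; linear_combination h1 - β * hab
      exact mul_left_cancel₀ (ne_of_gt hb) this
    exact ⟨⟨hyA, hyH⟩, z, ⟨hzA, hz⟩, a, b, ha, hb, hab, heq⟩

variable (V : Finset E)

/-- Key transfer lemma: if two affine functionals have the same sign pattern on the
vertex set `V`, then every point of the first section is related (same minimal face)
to a point of the second section. -/
lemma exists_rel_section_aux (ℓ₁ ℓ₂ : E →ₗ[ℝ] ℝ) (β₁ β₂ : ℝ)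
    (hsign : ∀ v ∈ V, SignType.sign (ℓ₁ v - β₁) = SignType.sign (ℓ₂ v - β₂))
    {x : E} (hx : x ∈ convexHull ℝ (V : Set E)) (hx1 : ℓ₁ x = β₁) (hpos : β₂ < ℓ₂ x) :
    ∃ z ∈ convexHull ℝ (V : Set E), ℓ₂ z = β₂ ∧
      z ∈ minExt (convexHull ℝ (V : Set E)) x ∧ x ∈ minExt (convexHull ℝ (V : Set E)) z := by
  classical
  set P := convexHull ℝ (V : Set E) with hP
  have hPc : Convex ℝ P := convex_convexHull ℝ _
  -- find a vertex in the minimal face with ℓ₂ > β₂ (hence ℓ₁ > β₁)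
  have h1 : ∃ v ∈ (V : Set E) ∩ minExt P x, β₂ < ℓ₂ v := by
    by_contra h
    push_neg at h
    have hsub : (V : Set E) ∩ minExt P x ⊆ {w | ℓ₂ w ≤ β₂} :=
      fun v hv => h v hv
    have hcvx : Convex ℝ {w | ℓ₂ w ≤ β₂} := convex_halfSpace_le ⟨ℓ₂.map_add, ℓ₂.map_smul⟩ β₂
    have := convexHull_min hsub hcvx (mem_convexHull_inter_minExt (V : Set E) hx)
    exact absurd this (not_le.2 hpos)
  obtain ⟨v, ⟨hvV, hvM⟩, hv2⟩ := h1
  have hv1 : β₁ < ℓ₁ v := by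
    have := hsign v hvV
    have h2 : SignType.sign (ℓ₂ v - β₂) = 1 := sign_eq_one_iff.2 (by linarith)
    rw [h2] at this
    have := sign_eq_one_iff.1 this
    linarith
  -- companion point z' with ℓ₁ z' < β₁
  obtain ⟨hvP, z', hz'P, a, b, ha, hb, hab, heq⟩ := hvM
  have hz'M : z' ∈ minExt P x := ⟨hz'P, v, hvP, b, a, hb, ha, by linarith, by
    rw [add_comm]; exact heq⟩
  have hz'lt : ℓ₁ z' < β₁ := by
    have h1 : a * ℓ₁ v + b * ℓ₁ z' = β₁ := by rw [← hx1, ← heq]; simp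
    have hmul : a * β₁ < a * ℓ₁ v := (mul_lt_mul_iff_right₀ ha).2 hv1
    have hbβ : β₁ - a * β₁ = b * β₁ := by linear_combination (-β₁) * hab
    have h2 : b * ℓ₁ z' < b * β₁ := by linarith
    exact lt_of_mul_lt_mul_left h2 (le_of_lt hb)
  -- find a vertex v₋ in minExt P z' with ℓ₁ < β₁
  have h2 : ∃ w ∈ (V : Set E) ∩ minExt P z', ℓ₁ w < β₁ := by
    by_contra h
    push_neg at h
    have hsub : (V : Set E) ∩ minExt P z' ⊆ {w | β₁ ≤ ℓ₁ w} := fun w hw => h w hw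
    have hcvx : Convex ℝ {w | β₁ ≤ ℓ₁ w} := convex_halfSpace_ge ⟨ℓ₁.map_add, ℓ₁.map_smul⟩ β₁
    have := convexHull_min hsub hcvx (mem_convexHull_inter_minExt (V : Set E) hz'P)
    exact absurd this (not_le.2 hz'lt)
  obtain ⟨vm, ⟨hvmV, hvmM⟩, hvm1⟩ := h2
  have hvmM' : vm ∈ minExt P x := minExt_trans hPc hz'M hvmM
  have hvm2 : ℓ₂ vm < β₂ := by
    have := hsign vm hvmV
    have h3 : SignType.sign (ℓ₁ vm - β₁) = -1 := sign_eq_neg_one_iff.2 (by linarith)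
    rw [h3] at this
    have := sign_eq_neg_one_iff.1 this.symm
    linarith
  -- the crossing point z on segment [x, v₋]
  obtain ⟨t, ht0, ht1, hteq⟩ : ∃ t : ℝ, 0 < t ∧ t < 1 ∧ (1 - t) * ℓ₂ x + t * ℓ₂ vm = β₂ := by
    have hD : (0:ℝ) < ℓ₂ x - ℓ₂ vm := by linarith
    refine ⟨(ℓ₂ x - β₂) / (ℓ₂ x - ℓ₂ vm), div_pos (by linarith) hD, ?_, ?_⟩
    · rw [div_lt_one hD]; linarith
    · field_simp [ne_of_gt hD]
      ring
  have hvmP : vm ∈ P := hvmM'.1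
  obtain ⟨_, z₂, hz₂P, a₂, b₂, ha₂, hb₂, hab₂, heq₂⟩ := hvmM'
  have hzP : (1 - t) • x + t • vm ∈ P := hPc hx hvmP (by linarith) (le_of_lt ht0) (by ring)
  have hz2 : ℓ₂ ((1 - t) • x + t • vm) = β₂ := by
    simp only [map_add, map_smul, smul_eq_mul]; linarith [hteq]
  have hs : (0:ℝ) < a₂ + t * b₂ := by positivity
  have hne : a₂ + t * b₂ ≠ 0 := ne_of_gt hs
  have hα1 : a₂ / (a₂ + t * b₂) < 1 := by
    rw [div_lt_one hs]; nlinarith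
  refine ⟨(1 - t) • x + t • vm, hzP, hz2,
    ⟨hzP, z₂, hz₂P, a₂ / (a₂ + t * b₂), 1 - a₂ / (a₂ + t * b₂), by positivity, by linarith,
      by ring, ?_⟩,
    ⟨hx, vm, hvmP, 1 - t, t, by linarith, ht0, by ring, rfl⟩⟩
  rw [← heq₂]
  match_scalars
  · rw [div_mul_eq_mul_div, div_eq_iff hne]
    linear_combination (-(a₂ * t)) * hab₂
  · field_simp
    linear_combination (-(t * b₂)) * hab₂
end Hyper

section Transfer
variable {E : Type*} [AddCommGroup E] [Module ℝ E]

lemma exists_rel_section (V : Finset E) (ℓ₁ ℓ₂ : E →ₗ[ℝ] ℝ) (β₁ β₂ : ℝ)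
    (hsign : ∀ v ∈ V, SignType.sign (ℓ₁ v - β₁) = SignType.sign (ℓ₂ v - β₂))
    {x : E} (hx : x ∈ convexHull ℝ (V : Set E)) (hx1 : ℓ₁ x = β₁) :
    ∃ z ∈ convexHull ℝ (V : Set E), ℓ₂ z = β₂ ∧
      z ∈ minExt (convexHull ℝ (V : Set E)) x ∧ x ∈ minExt (convexHull ℝ (V : Set E)) z := by
  rcases lt_trichotomy (ℓ₂ x) β₂ with h | h | h
  · have hsign' : ∀ v ∈ V, SignType.sign ((-ℓ₁) v - (-β₁)) = SignType.sign ((-ℓ₂) v - (-β₂)) := by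
      intro v hv
      have h1 : (-ℓ₁) v - (-β₁) = -(ℓ₁ v - β₁) := by simp; ring
      have h2 : (-ℓ₂) v - (-β₂) = -(ℓ₂ v - β₂) := by simp; ring
      rw [h1, h2, Left.sign_neg, Left.sign_neg, hsign v hv]
    have hx1' : (-ℓ₁) x = -β₁ := by simp [hx1]
    have hpos : -β₂ < (-ℓ₂) x := by simp; linarith
    obtain ⟨z, hzP, hz2, hm1, hm2⟩ := exists_rel_section_aux V (-ℓ₁) (-ℓ₂) (-β₁) (-β₂)
      hsign' hx hx1' hpos
    refine ⟨z, hzP, ?_, hm1, hm2⟩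
    have : -(ℓ₂ z) = -β₂ := by simpa using hz2
    linarith
  · exact ⟨x, hx, h, mem_minExt_self hx, mem_minExt_self hx⟩
  · exact exists_rel_section_aux V ℓ₁ ℓ₂ β₁ β₂ hsign hx hx1 h

/-- Transfer of a candidate extreme set to another hyperplane section. -/
def sectTransfer (A : Set E) (ℓ : E →ₗ[ℝ] ℝ) (β : ℝ) (F : Set E) : Set E :=
  {y | y ∈ A ∩ {w | ℓ w = β} ∧ ∃ x ∈ F, x ∈ minExt A y ∧ y ∈ minExt A x}

lemma sectTransfer_mono (A : Set E) (ℓ : E →ₗ[ℝ] ℝ) (β : ℝ) {F F' : Set E} (h : F ⊆ F') :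
    sectTransfer A ℓ β F ⊆ sectTransfer A ℓ β F' := by
  rintro y ⟨hy, x, hxF, hrel⟩
  exact ⟨hy, x, h hxF, hrel⟩

lemma sectTransfer_isExtreme {A : Set E} (hA : Convex ℝ A) (ℓ₁ ℓ₂ : E →ₗ[ℝ] ℝ) (β₁ β₂ : ℝ)
    (h21 : ∀ y ∈ A ∩ {w | ℓ₂ w = β₂}, ∃ x ∈ A ∩ {w | ℓ₁ w = β₁},
      x ∈ minExt A y ∧ y ∈ minExt A x)
    {F : Set E} (hF : IsExtreme ℝ (A ∩ {w | ℓ₁ w = β₁}) F) :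
    IsExtreme ℝ (A ∩ {w | ℓ₂ w = β₂}) (sectTransfer A ℓ₂ β₂ F) := by
  rw [isExtreme_iff_minExt]
  refine ⟨fun y hy => hy.1, ?_⟩
  rintro y ⟨⟨hyA, hyH⟩, x, hxF, hxm, hym⟩ y' hy'
  rw [minExt_inter_hyper ℓ₂ β₂ hyH] at hy'
  obtain ⟨hy'm, hy'H⟩ := hy'
  have hy'A : y' ∈ A := minExt_subset hy'm
  obtain ⟨x', ⟨hx'A, hx'H⟩, hx'm, hy'm'⟩ := h21 y' ⟨hy'A, hy'H⟩
  have hx'x : x' ∈ minExt A x :=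
    minExt_trans hA hym (minExt_trans hA hy'm hx'm)
  have hxQ : x ∈ A ∩ {w | ℓ₁ w = β₁} := hF.1 hxF
  have hx'F : x' ∈ F := by
    refine (isExtreme_iff_minExt.1 hF).2 x hxF ?_
    rw [minExt_inter_hyper ℓ₁ β₁ hxQ.2]
    exact ⟨hx'x, hx'H⟩
  exact ⟨⟨hy'A, hy'H⟩, x', hx'F, hx'm, hy'm'⟩

lemma sectTransfer_roundtrip {A : Set E} (hA : Convex ℝ A) (ℓ₁ ℓ₂ : E →ₗ[ℝ] ℝ) (β₁ β₂ : ℝ)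
    (h12 : ∀ x ∈ A ∩ {w | ℓ₁ w = β₁}, ∃ y ∈ A ∩ {w | ℓ₂ w = β₂},
      y ∈ minExt A x ∧ x ∈ minExt A y)
    {F : Set E} (hF : IsExtreme ℝ (A ∩ {w | ℓ₁ w = β₁}) F) :
    sectTransfer A ℓ₁ β₁ (sectTransfer A ℓ₂ β₂ F) = F := by
  ext x₂
  constructor
  · rintro ⟨hx₂Q, y, ⟨hyQ, x, hxF, hxm, hym⟩, hymx₂, hx₂my⟩
    have hx₂x : x₂ ∈ minExt A x := minExt_trans hA hym hx₂my
    have hxQ : x ∈ A ∩ {w | ℓ₁ w = β₁} := hF.1 hxF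
    refine (isExtreme_iff_minExt.1 hF).2 x hxF ?_
    rw [minExt_inter_hyper ℓ₁ β₁ hxQ.2]
    exact ⟨hx₂x, hx₂Q.2⟩
  · intro hxF
    have hxQ : x₂ ∈ A ∩ {w | ℓ₁ w = β₁} := hF.1 hxF
    obtain ⟨y, hyQ, hym, hxm⟩ := h12 x₂ hxQ
    exact ⟨hxQ, y, ⟨hyQ, x₂, hxF, hxm, hym⟩, hym, hxm⟩

lemma nonempty_orderIso_sections {A : Set E} (hA : Convex ℝ A) (ℓ₁ ℓ₂ : E →ₗ[ℝ] ℝ) (β₁ β₂ : ℝ)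
    (h12 : ∀ x ∈ A ∩ {w | ℓ₁ w = β₁}, ∃ y ∈ A ∩ {w | ℓ₂ w = β₂},
      y ∈ minExt A x ∧ x ∈ minExt A y)
    (h21 : ∀ y ∈ A ∩ {w | ℓ₂ w = β₂}, ∃ x ∈ A ∩ {w | ℓ₁ w = β₁},
      x ∈ minExt A y ∧ y ∈ minExt A x) :
    Nonempty ({F : Set E // IsExtreme ℝ (A ∩ {w | ℓ₁ w = β₁}) F} ≃o
      {F : Set E // IsExtreme ℝ (A ∩ {w | ℓ₂ w = β₂}) F}) := by
  refine ⟨{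
    toFun := fun F => ⟨sectTransfer A ℓ₂ β₂ F.1, sectTransfer_isExtreme hA ℓ₁ ℓ₂ β₁ β₂ h21 F.2⟩
    invFun := fun G => ⟨sectTransfer A ℓ₁ β₁ G.1, sectTransfer_isExtreme hA ℓ₂ ℓ₁ β₂ β₁ h12 G.2⟩
    left_inv := fun F => Subtype.ext (sectTransfer_roundtrip hA ℓ₁ ℓ₂ β₁ β₂ h12 F.2)
    right_inv := fun G => Subtype.ext (sectTransfer_roundtrip hA ℓ₂ ℓ₁ β₂ β₁ h21 G.2)
    map_rel_iff' := ?_ }⟩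
  intro F F'
  constructor
  · intro h
    have h2 := sectTransfer_mono A ℓ₁ β₁ (F := sectTransfer A ℓ₂ β₂ F.1)
      (F' := sectTransfer A ℓ₂ β₂ F'.1) h
    rw [sectTransfer_roundtrip hA ℓ₁ ℓ₂ β₁ β₂ h12 F.2,
      sectTransfer_roundtrip hA ℓ₁ ℓ₂ β₁ β₂ h12 F'.2] at h2
    exact h2
  · intro h
    exact sectTransfer_mono A ℓ₂ β₂ h

end Transfer

section Count
variable {M : Type*} [AddCommGroup M] [Module ℝ M] [FiniteDimensional ℝ M]
variable {ι : Type*} [DecidableEq ι]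

/-- The sign pattern of the point `m` on the functionals indexed by `A`. -/
noncomputable def patt (ℓ : ι → M →ₗ[ℝ] ℝ) (A : Finset ι) (m : M) : ι → SignType :=
  fun v => if v ∈ A then SignType.sign (ℓ v m) else 0

def patSet (ℓ : ι → M →ₗ[ℝ] ℝ) (A : Finset ι) (T : Submodule ℝ M) : Set (ι → SignType) :=
  {g | ∃ m ∈ T, patt ℓ A m = g}

lemma patSet_finite (ℓ : ι → M →ₗ[ℝ] ℝ) (A : Finset ι) (T : Submodule ℝ M) :
    (patSet ℓ A T).Finite := by
  have h : patSet ℓ A T ⊆ Set.range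
      (fun h : (A → SignType) => fun v => if hv : v ∈ A then h ⟨v, hv⟩ else 0) := by
    rintro g ⟨m, hm, rfl⟩
    refine ⟨fun p => SignType.sign (ℓ p.1 m), ?_⟩
    funext v
    by_cases hv : v ∈ A <;> simp [patt, hv]
  exact (Set.finite_range _).subset h

lemma patSet_ncard_le (ℓ : ι → M →ₗ[ℝ] ℝ) (A : Finset ι) :
    ∀ T : Submodule ℝ M,
      (patSet ℓ A T).ncard ≤ (3 * A.card + 1) ^ (Module.finrank ℝ ↥T) := by
  induction A using Finset.induction_on with
  | empty =>
    intro T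
    have h : patSet ℓ ∅ T ⊆ {fun _ => 0} := by
      rintro g ⟨m, hm, rfl⟩
      simp only [Set.mem_singleton_iff]
      funext v; simp [patt]
    calc (patSet ℓ ∅ T).ncard ≤ ({fun _ => (0:SignType)} : Set (ι → SignType)).ncard :=
          Set.ncard_le_ncard h (Set.finite_singleton _)
      _ = 1 := Set.ncard_singleton _
      _ ≤ _ := by simp
  | @insert a A ha ih =>
    intro T
    by_cases hker : ∀ m ∈ T, ℓ a m = 0
    · have hsub : patSet ℓ (insert a A) T ⊆ patSet ℓ A T := by
        rintro g ⟨m, hm, rfl⟩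
        refine ⟨m, hm, ?_⟩
        funext v
        by_cases hv : v = a
        · subst hv; simp [patt, ha, hker m hm]
        · simp [patt, hv]
      refine le_trans (Set.ncard_le_ncard hsub (patSet_finite ℓ A T)) (le_trans (ih T) ?_)
      refine Nat.pow_le_pow_left (by rw [Finset.card_insert_of_notMem ha]; omega) _
    · push_neg at hker
      obtain ⟨m₀, hm₀T, hm₀⟩ := hker
      set K := T ⊓ LinearMap.ker (ℓ a) with hKdef
      have hKlt : K < T := by
        refine lt_of_le_of_ne inf_le_left (fun hEq => hm₀ ?_)
        have hmem : m₀ ∈ K := by rw [hEq]; exact hm₀T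
        exact hmem.2
      have hrk : Module.finrank ℝ ↥K < Module.finrank ℝ ↥T :=
        Submodule.finrank_lt_finrank_of_lt hKlt
      obtain ⟨D, hD⟩ : ∃ D, Module.finrank ℝ ↥T = D + 1 :=
        ⟨Module.finrank ℝ ↥T - 1, by omega⟩
      -- segment lemma: two strictly separated points with equal `A`-patterns give a
      -- kernel point with the same `A`-pattern.
      have seg : ∀ m₁ ∈ T, ∀ m₂ ∈ T, 0 < ℓ a m₁ → ℓ a m₂ < 0 →
          (∀ v ∈ A, SignType.sign (ℓ v m₁) = SignType.sign (ℓ v m₂)) →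
          ∃ m ∈ K, ∀ v ∈ A, SignType.sign (ℓ v m) = SignType.sign (ℓ v m₁) := by
        intro m₁ hm₁ m₂ hm₂ h₁ h₂ hvs
        have hc₁ : (0:ℝ) < -(ℓ a m₂) := by linarith
        refine ⟨(-(ℓ a m₂)) • m₁ + (ℓ a m₁) • m₂,
          Submodule.mem_inf.2 ⟨T.add_mem (T.smul_mem _ hm₁) (T.smul_mem _ hm₂),
            LinearMap.mem_ker.2 ?_⟩, ?_⟩
        · simp only [map_add, map_smul, smul_eq_mul]
          ring
        · intro v hv
          have heval : ℓ v ((-(ℓ a m₂)) • m₁ + (ℓ a m₁) • m₂)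
              = (-(ℓ a m₂)) * ℓ v m₁ + (ℓ a m₁) * ℓ v m₂ := by
            simp [map_add, map_smul, smul_eq_mul]
          rw [heval]
          rcases lt_trichotomy (ℓ v m₁) 0 with h | h | h
          · have h₂v : ℓ v m₂ < 0 :=
              sign_eq_neg_one_iff.1 ((hvs v hv).symm.trans (sign_eq_neg_one_iff.2 h))
            have hcomb : (-(ℓ a m₂)) * ℓ v m₁ + (ℓ a m₁) * ℓ v m₂ < 0 := by
              nlinarith [mul_neg_of_pos_of_neg hc₁ h, mul_neg_of_pos_of_neg h₁ h₂v]
            rw [sign_eq_neg_one_iff.2 hcomb, sign_eq_neg_one_iff.2 h]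
          · have h₂v : ℓ v m₂ = 0 :=
              sign_eq_zero_iff.1 ((hvs v hv).symm.trans (sign_eq_zero_iff.2 h))
            rw [h, h₂v]
            simp
          · have h₂v : 0 < ℓ v m₂ :=
              sign_eq_one_iff.1 ((hvs v hv).symm.trans (sign_eq_one_iff.2 h))
            have hcomb : 0 < (-(ℓ a m₂)) * ℓ v m₁ + (ℓ a m₁) * ℓ v m₂ := by
              nlinarith [mul_pos hc₁ h, mul_pos h₁ h₂v]
            rw [sign_eq_one_iff.2 hcomb, sign_eq_one_iff.2 h]
      -- the four pieces
      set N := patSet ℓ (insert a A) T with hN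
      set S0 : Set (ι → SignType) := {g ∈ N | g a = 0} with hS0
      set Sp : Set (ι → SignType) := {g ∈ N | g a = 1 ∧ Function.update g a (-1) ∈ N} with hSp
      set Sm : Set (ι → SignType) := {g ∈ N | g a = -1 ∧ Function.update g a 1 ∈ N} with hSm
      set So : Set (ι → SignType) :=
        {g ∈ N | (g a = 1 ∧ Function.update g a (-1) ∉ N) ∨
          (g a = -1 ∧ Function.update g a 1 ∉ N)} with hSo
      have hcover : N ⊆ S0 ∪ Sp ∪ Sm ∪ So := by
        intro g hg
        rcases hga : g a with _ | _ | _
        · exact Or.inl (Or.inl (Or.inl ⟨hg, hga⟩))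
        · by_cases hu : Function.update g a 1 ∈ N
          · exact Or.inl (Or.inr ⟨hg, hga, hu⟩)
          · exact Or.inr ⟨hg, Or.inr ⟨hga, hu⟩⟩
        · by_cases hu : Function.update g a (-1) ∈ N
          · exact Or.inl (Or.inl (Or.inr ⟨hg, hga, hu⟩))
          · exact Or.inr ⟨hg, Or.inl ⟨hga, hu⟩⟩
      -- helper: restricted pattern of a point with the same `A`-signs as a witness
      have hres : ∀ (m m₁ : M) (g : ι → SignType), patt ℓ (insert a A) m₁ = g →
          (∀ v ∈ A, SignType.sign (ℓ v m) = SignType.sign (ℓ v m₁)) →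
          patt ℓ A m = Function.update g a 0 := by
        intro m m₁ g hg₁ hsame
        funext v
        by_cases hv : v = a
        · subst hv; simp [patt, ha, Function.update_self]
        · rw [Function.update_of_ne hv]
          have h₁ := congrFun hg₁ v
          by_cases hvA : v ∈ A
          · simp only [patt, if_pos (Finset.mem_insert_of_mem hvA)] at h₁
            simp only [patt, if_pos hvA]
            rw [hsame v hvA, h₁]
          · have hvn : v ∉ insert a A := by simp [Finset.mem_insert, hv, hvA]
            simp only [patt, if_neg hvn] at h₁
            simp only [patt, if_neg hvA]
            exact h₁
      have hS0map : ∀ g ∈ S0, Function.update g a 0 ∈ patSet ℓ A K := by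
        rintro g ⟨⟨m, hm, hgm⟩, hga⟩
        have hsgn : SignType.sign (ℓ a m) = 0 := by
          have h := congrFun hgm a
          simp only [patt, if_pos (Finset.mem_insert_self a A)] at h
          rw [h, hga]
        exact ⟨m, Submodule.mem_inf.2 ⟨hm, LinearMap.mem_ker.2 (sign_eq_zero_iff.1 hsgn)⟩,
          hres m m g hgm (fun v _ => rfl)⟩
      have hSpmap : ∀ g ∈ Sp, Function.update g a 0 ∈ patSet ℓ A K := by
        rintro g ⟨⟨m₁, hm₁, hg₁⟩, hga, m₂, hm₂, hg₂⟩
        have hs₁ : SignType.sign (ℓ a m₁) = 1 := by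
          have h := congrFun hg₁ a
          simp only [patt, if_pos (Finset.mem_insert_self a A)] at h
          rw [h, hga]
        have hs₂ : SignType.sign (ℓ a m₂) = -1 := by
          have h := congrFun hg₂ a
          simp only [patt, if_pos (Finset.mem_insert_self a A)] at h
          rw [h, Function.update_self]
        have hpos := sign_eq_one_iff.1 hs₁
        have hneg := sign_eq_neg_one_iff.1 hs₂
        have hvs : ∀ v ∈ A, SignType.sign (ℓ v m₁) = SignType.sign (ℓ v m₂) := by
          intro v hv
          have hva : v ≠ a := fun h => ha (h ▸ hv)
          have h₁ := congrFun hg₁ v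
          have h₂ := congrFun hg₂ v
          simp only [patt, if_pos (Finset.mem_insert_of_mem hv)] at h₁ h₂
          rw [Function.update_of_ne hva] at h₂
          rw [h₁, h₂]
        obtain ⟨m, hmK, hmpat⟩ := seg m₁ hm₁ m₂ hm₂ hpos hneg hvs
        exact ⟨m, hmK, hres m m₁ g hg₁ hmpat⟩
      have hSmmap : ∀ g ∈ Sm, Function.update g a 0 ∈ patSet ℓ A K := by
        rintro g ⟨⟨m₁, hm₁, hg₁⟩, hga, m₂, hm₂, hg₂⟩
        have hs₁ : SignType.sign (ℓ a m₁) = -1 := by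
          have h := congrFun hg₁ a
          simp only [patt, if_pos (Finset.mem_insert_self a A)] at h
          rw [h, hga]
        have hs₂ : SignType.sign (ℓ a m₂) = 1 := by
          have h := congrFun hg₂ a
          simp only [patt, if_pos (Finset.mem_insert_self a A)] at h
          rw [h, Function.update_self]
        have hneg := sign_eq_neg_one_iff.1 hs₁
        have hpos := sign_eq_one_iff.1 hs₂
        have hvs : ∀ v ∈ A, SignType.sign (ℓ v m₂) = SignType.sign (ℓ v m₁) := by
          intro v hv
          have hva : v ≠ a := fun h => ha (h ▸ hv)
          have h₁ := congrFun hg₁ v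
          have h₂ := congrFun hg₂ v
          simp only [patt, if_pos (Finset.mem_insert_of_mem hv)] at h₁ h₂
          rw [Function.update_of_ne hva] at h₂
          rw [h₁, h₂]
        obtain ⟨m, hmK, hmpat⟩ := seg m₂ hm₂ m₁ hm₁ hpos hneg hvs
        refine ⟨m, hmK, hres m m₁ g hg₁ ?_⟩
        intro v hv
        rw [hmpat v hv, hvs v hv]
      have hSomap : ∀ g ∈ So, Function.update g a 0 ∈ patSet ℓ A T := by
        rintro g ⟨⟨m₁, hm₁, hg₁⟩, -⟩
        exact ⟨m₁, hm₁, hres m₁ m₁ g hg₁ (fun v _ => rfl)⟩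
      -- injectivity of update-at-a-with-0 on fixed-value-at-a sets
      have hinj : ∀ g₁ g₂ : ι → SignType, g₁ a = g₂ a →
          Function.update g₁ a 0 = Function.update g₂ a 0 → g₁ = g₂ := by
        intro g₁ g₂ hEq h
        funext v
        by_cases hv : v = a
        · subst hv; exact hEq
        · have := congrFun h v
          rwa [Function.update_of_ne hv, Function.update_of_ne hv] at this
      have hSoinj : Set.InjOn (fun g => Function.update g a 0) So := by
        rintro g₁ ⟨hg₁N, hc₁⟩ g₂ ⟨hg₂N, hc₂⟩ h
        replace h : Function.update g₁ a 0 = Function.update g₂ a 0 := h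
        by_cases hEq : g₁ a = g₂ a
        · exact hinj g₁ g₂ hEq h
        · exfalso
          have hoff : ∀ v, v ≠ a → g₁ v = g₂ v := by
            intro v hv
            have := congrFun h v
            rwa [Function.update_of_ne hv, Function.update_of_ne hv] at this
          rcases hc₁ with ⟨h1a, h1u⟩ | ⟨h1a, h1u⟩ <;> rcases hc₂ with ⟨h2a, h2u⟩ | ⟨h2a, h2u⟩
          · exact hEq (h1a.trans h2a.symm)
          · refine h1u ?_
            have : Function.update g₁ a (-1) = g₂ := by
              funext v
              by_cases hv : v = a
              · subst hv; rw [Function.update_self, h2a]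
              · rw [Function.update_of_ne hv]; exact hoff v hv
            rw [this]; exact hg₂N
          · refine h1u ?_
            have : Function.update g₁ a 1 = g₂ := by
              funext v
              by_cases hv : v = a
              · subst hv; rw [Function.update_self, h2a]
              · rw [Function.update_of_ne hv]; exact hoff v hv
            rw [this]; exact hg₂N
          · exact hEq (h1a.trans h2a.symm)
      have hfix : ∀ (s : SignType) (S : Set (ι → SignType)), (∀ g ∈ S, g a = s) →
          Set.InjOn (fun g => Function.update g a 0) S := by
        intro s S hS g₁ hg₁ g₂ hg₂ h
        exact hinj g₁ g₂ ((hS g₁ hg₁).trans (hS g₂ hg₂).symm) h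
      -- finiteness
      have hNfin : N.Finite := patSet_finite ℓ (insert a A) T
      have hS0N : S0 ⊆ N := fun g hg => hg.1
      have hSpN : Sp ⊆ N := fun g hg => hg.1
      have hSmN : Sm ⊆ N := fun g hg => hg.1
      have hSoN : So ⊆ N := fun g hg => hg.1
      have hfinK := patSet_finite ℓ A K
      have hfinT := patSet_finite ℓ A T
      have c0 : S0.ncard ≤ (patSet ℓ A K).ncard :=
        Set.ncard_le_ncard_of_injOn _ hS0map (hfix 0 S0 (fun g hg => hg.2)) hfinK
      have cp : Sp.ncard ≤ (patSet ℓ A K).ncard :=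
        Set.ncard_le_ncard_of_injOn _ hSpmap (hfix 1 Sp (fun g hg => hg.2.1)) hfinK
      have cm : Sm.ncard ≤ (patSet ℓ A K).ncard :=
        Set.ncard_le_ncard_of_injOn _ hSmmap (hfix (-1) Sm (fun g hg => hg.2.1)) hfinK
      have co : So.ncard ≤ (patSet ℓ A T).ncard :=
        Set.ncard_le_ncard_of_injOn _ hSomap hSoinj hfinT
      have hcard : N.ncard ≤ S0.ncard + Sp.ncard + Sm.ncard + So.ncard := by
        calc N.ncard ≤ (S0 ∪ Sp ∪ Sm ∪ So).ncard := Set.ncard_le_ncard hcover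
              ((((hNfin.subset hS0N).union (hNfin.subset hSpN)).union
                (hNfin.subset hSmN)).union (hNfin.subset hSoN))
          _ ≤ (S0 ∪ Sp ∪ Sm).ncard + So.ncard := Set.ncard_union_le _ _
          _ ≤ (S0 ∪ Sp).ncard + Sm.ncard + So.ncard := by
              have := Set.ncard_union_le (S0 ∪ Sp) Sm
              omega
          _ ≤ S0.ncard + Sp.ncard + Sm.ncard + So.ncard := by
              have := Set.ncard_union_le S0 Sp
              omega
      -- the inductive bounds
      have hK_le : (patSet ℓ A K).ncard ≤ (3 * A.card + 1) ^ D := by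
        refine (ih K).trans (Nat.pow_le_pow_right (by omega) (by omega))
      have hT_le : (patSet ℓ A T).ncard ≤ (3 * A.card + 1) ^ (D + 1) := by
        have := ih T
        rwa [hD] at this
      rw [Finset.card_insert_of_notMem ha, hD]
      have harr : 3 * (A.card + 1) + 1 = 3 * A.card + 4 := by ring
      rw [harr]
      calc N.ncard ≤ S0.ncard + Sp.ncard + Sm.ncard + So.ncard := hcard
        _ ≤ (3 * A.card + 1) ^ D + (3 * A.card + 1) ^ D + (3 * A.card + 1) ^ D
            + (3 * A.card + 1) ^ (D + 1) := by omega
        _ = (3 * A.card + 1) ^ D * (3 * A.card + 4) := by ring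
        _ ≤ (3 * A.card + 4) ^ D * (3 * A.card + 4) :=
            Nat.mul_le_mul_right _ (Nat.pow_le_pow_left (by omega) D)
        _ = (3 * A.card + 4) ^ (D + 1) := (pow_succ _ _).symm
end Count

section Glue
open RealInnerProductSpace

variable {d : ℕ}

/-- The linear functional `x ↦ ⟪u, x⟫` on Euclidean space. -/
noncomputable def innerFun (u : EuclideanSpace ℝ (Fin d)) : EuclideanSpace ℝ (Fin d) →ₗ[ℝ] ℝ where
  toFun := fun x => ⟪u, x⟫
  map_add' := fun x y => inner_add_right u x y
  map_smul' := fun c x => by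
    simp only [RingHom.id_apply, smul_eq_mul]
    exact real_inner_smul_right u x c

/-- For a fixed vertex `v`, the evaluation `(u, β) ↦ ⟪u, v⟫ - β` is linear in `(u, β)`. -/
noncomputable def lfam (v : EuclideanSpace ℝ (Fin d)) :
    (EuclideanSpace ℝ (Fin d) × ℝ) →ₗ[ℝ] ℝ where
  toFun := fun p => ⟪p.1, v⟫ - p.2
  map_add' := fun p q => by
    simp only [Prod.fst_add, Prod.snd_add, inner_add_left]
    ring
  map_smul' := fun c p => by
    simp only [Prod.smul_fst, Prod.smul_snd, real_inner_smul_left, RingHom.id_apply,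
      smul_eq_mul]
    ring

theorem card_combinatorial_types_of_sections_le' (d : ℕ) :
    ∃ C : ℕ, ∀ (V : Finset (EuclideanSpace ℝ (Fin d))) (P : Set (EuclideanSpace ℝ (Fin d))),
      P = convexHull ℝ (V : Set (EuclideanSpace ℝ (Fin d))) →
      Set.extremePoints ℝ P = (V : Set (EuclideanSpace ℝ (Fin d))) →
      (interior P).Nonempty →
      ∃ L : Set (Set (EuclideanSpace ℝ (Fin d))),
        L.Finite ∧ L.ncard ≤ C * V.card ^ (2 * d + 1) * 2 ^ d ∧
        ∀ (u : EuclideanSpace ℝ (Fin d)) (β : ℝ), u ≠ 0 →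
          ∃ Q ∈ L, Nonempty
            ({F : Set (EuclideanSpace ℝ (Fin d)) // IsExtreme ℝ (P ∩ {x | ⟪u, x⟫ = β}) F} ≃o
             {F : Set (EuclideanSpace ℝ (Fin d)) // IsExtreme ℝ Q F}) := by
  classical
  set E := EuclideanSpace ℝ (Fin d)
  refine ⟨4 ^ (d + 1), ?_⟩
  intro V P hP hExt hInt
  subst hP
  -- the vertex set is nonempty
  have hVne : V.Nonempty := by
    rcases V.eq_empty_or_nonempty with h | h
    · exfalso
      rw [h] at hInt
      simp only [Finset.coe_empty, convexHull_empty, interior_empty] at hInt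
      exact Set.not_nonempty_empty hInt
    · exact h
  have hn : 1 ≤ V.card := Finset.card_pos.2 hVne
  set M := E × ℝ
  have hrk : Module.finrank ℝ (⊤ : Submodule ℝ M) = d + 1 := by
    rw [finrank_top]
    simp [M, E, Module.finrank_prod, finrank_euclideanSpace_fin]
  set Sg := patSet (lfam (d := d)) V (⊤ : Submodule ℝ M) with hSg
  have hSgfin : Sg.Finite := patSet_finite _ V ⊤
  have hSgcard : Sg.ncard ≤ (3 * V.card + 1) ^ (d + 1) := by
    have := patSet_ncard_le (lfam (d := d)) V (⊤ : Submodule ℝ M)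
    rwa [hrk] at this
  set rep : (E → SignType) → Set E := fun g =>
    if h : ∃ q : M, q.1 ≠ 0 ∧ patt (lfam (d := d)) V q = g then
      convexHull ℝ (V : Set E) ∩ {x | ⟪(Classical.choose h).1, x⟫ = (Classical.choose h).2}
    else ∅ with hrep
  refine ⟨rep '' Sg, hSgfin.image _, ?_, ?_⟩
  · calc (rep '' Sg).ncard ≤ Sg.ncard := Set.ncard_image_le hSgfin
      _ ≤ (3 * V.card + 1) ^ (d + 1) := hSgcard
      _ ≤ (4 * V.card) ^ (d + 1) := Nat.pow_le_pow_left (by omega) _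
      _ = 4 ^ (d + 1) * V.card ^ (d + 1) := by rw [mul_pow]
      _ ≤ 4 ^ (d + 1) * V.card ^ (2 * d + 1) :=
          Nat.mul_le_mul_left _ (Nat.pow_le_pow_right hn (by omega))
      _ ≤ 4 ^ (d + 1) * V.card ^ (2 * d + 1) * 2 ^ d :=
          Nat.le_mul_of_pos_right _ (pow_pos (by norm_num) d)
  · intro u β hu
    set p : M := (u, β) with hp
    have hgmem : patt (lfam (d := d)) V p ∈ Sg := ⟨p, trivial, rfl⟩
    have hex : ∃ q : M, q.1 ≠ 0 ∧ patt (lfam (d := d)) V q = patt (lfam (d := d)) V p :=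
      ⟨p, hu, rfl⟩
    refine ⟨rep (patt (lfam (d := d)) V p), Set.mem_image_of_mem _ hgmem, ?_⟩
    have hQ : rep (patt (lfam (d := d)) V p) = convexHull ℝ (V : Set E) ∩
        {x | ⟪(Classical.choose hex).1, x⟫ = (Classical.choose hex).2} := dif_pos hex
    rw [hQ]
    obtain ⟨hq1, hq2⟩ := Classical.choose_spec hex
    set q : M := Classical.choose hex
    -- sign condition between the two hyperplanes
    have hsign : ∀ v ∈ V, SignType.sign ((innerFun u) v - β)
        = SignType.sign ((innerFun q.1) v - q.2) := by
      intro v hv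
      have h := congrFun hq2 v
      simp only [patt, if_pos hv] at h
      exact h.symm
    have hA : Convex ℝ (convexHull ℝ (V : Set E)) := convex_convexHull ℝ _
    have h12 : ∀ x ∈ convexHull ℝ (V : Set E) ∩ {w | (innerFun u) w = β},
        ∃ y ∈ convexHull ℝ (V : Set E) ∩ {w | (innerFun q.1) w = q.2},
          y ∈ minExt (convexHull ℝ (V : Set E)) x ∧ x ∈ minExt (convexHull ℝ (V : Set E)) y := by
      rintro x ⟨hx, hx1⟩
      obtain ⟨z, hzP, hz2, hm1, hm2⟩ :=
        exists_rel_section V (innerFun u) (innerFun q.1) β q.2 hsign hx hx1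
      exact ⟨z, ⟨hzP, hz2⟩, hm1, hm2⟩
    have h21 : ∀ y ∈ convexHull ℝ (V : Set E) ∩ {w | (innerFun q.1) w = q.2},
        ∃ x ∈ convexHull ℝ (V : Set E) ∩ {w | (innerFun u) w = β},
          x ∈ minExt (convexHull ℝ (V : Set E)) y ∧ y ∈ minExt (convexHull ℝ (V : Set E)) x := by
      rintro y ⟨hy, hy2⟩
      obtain ⟨z, hzP, hz1, hm1, hm2⟩ :=
        exists_rel_section V (innerFun q.1) (innerFun u) q.2 β
          (fun v hv => (hsign v hv).symm) hy hy2
      exact ⟨z, ⟨hzP, hz1⟩, hm1, hm2⟩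
    exact nonempty_orderIso_sections hA (innerFun u) (innerFun q.1) β q.2 h12 h21
end Glue


/-- For every dimension `d` there is a constant `C` such that any full-dimensional polytope
`P ⊆ ℝᵈ` with `n` vertices has at most `C·n^{2d+1}·2^d` combinatorial types of affine
hyperplane sections `P ∩ H`. -/
theorem card_combinatorial_types_of_sections_le (d : ℕ) :
    ∃ C : ℕ, ∀ (V : Finset (EuclideanSpace ℝ (Fin d))) (P : Set (EuclideanSpace ℝ (Fin d))),
      P = convexHull ℝ (V : Set (EuclideanSpace ℝ (Fin d))) →
      Set.extremePoints ℝ P = (V : Set (EuclideanSpace ℝ (Fin d))) →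
      (interior P).Nonempty →
      ∃ L : Set (Set (EuclideanSpace ℝ (Fin d))),
        L.Finite ∧ L.ncard ≤ C * V.card ^ (2 * d + 1) * 2 ^ d ∧
        ∀ (u : EuclideanSpace ℝ (Fin d)) (β : ℝ), u ≠ 0 →
          ∃ Q ∈ L, CombEquiv (P ∩ {x | ⟪u, x⟫ = β}) Q :=
  card_combinatorial_types_of_sections_le' d
end

section
/- Let P ⊂ ℝᵈ be a polytope and H₁, H₂ affine hyperplanes neither of which contains a vertex of P. If H₁ and H₂ intersect the relative interiors of exactly the same set of edges of P, then the face lattices of P ∩ H₁ and P ∩ H₂ are isomorphic. -/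
open RealInnerProductSpace

section MinFace
variable {E : Type*} [AddCommGroup E] [Module ℝ E]

/-- The minimal "face" of `x` in `X`. -/
def minFace (X : Set E) (x : E) : Set E :=
  {y | y ∈ X ∧ ∃ z ∈ X, x ∈ openSegment ℝ y z}

lemma self_mem_minFace {X : Set E} {x : E} (hx : x ∈ X) : x ∈ minFace X x :=
  ⟨hx, x, hx, by rw [openSegment_same]; exact Set.mem_singleton x⟩

lemma minFace_subset {X : Set E} {x : E} : minFace X x ⊆ X := fun _ h => h.1

lemma minFace_subset_extreme {X A : Set E} {x : E} (hA : IsExtreme ℝ X A) (hx : x ∈ A) :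
    minFace X x ⊆ A := by
  rintro y ⟨hy, z, hz, hmem⟩
  exact hA.2 hy hz hx hmem

lemma minFace_isExtreme {X : Set E} (hX : Convex ℝ X) {x : E} (hx : x ∈ X) :
    IsExtreme ℝ X (minFace X x) := by
  refine ⟨minFace_subset, ?_⟩
  rintro p hp q hq y ⟨hyX, z, hz, a, b, ha, hb, hab, haby⟩ ⟨s, t, hs, ht, hst, hsty⟩
  have key : ∀ (s t : ℝ) (p' q' : E), 0 < s → 0 < t → s + t = 1 →
      p' ∈ X → q' ∈ X → (s • p' + t • q' = y) → p' ∈ minFace X x := by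
    intro s t p' q' hs ht hst hp' hq' hy'
    have hs1 : s < 1 := by linarith
    have ha1 : a < 1 := by linarith
    have hc : a * s < 1 := by nlinarith
    have hc0 : 0 < a * s := mul_pos ha hs
    have hpos : (0:ℝ) < 1 - a * s := by linarith
    have hne : (1:ℝ) - a * s ≠ 0 := ne_of_gt hpos
    set w : E := ((a * t)/(1 - a * s)) • q' + (b/(1 - a * s)) • z with hw_def
    have hw : w ∈ X := by
      have h1 : (a * t)/(1 - a * s) + b/(1 - a * s) = 1 := by
        rw [← add_div, div_eq_one_iff_eq hne]
        linear_combination a * hst + hab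
      exact hX hq' hz (div_nonneg (by positivity) hpos.le) (div_nonneg hb.le hpos.le) h1
    refine ⟨hp', w, hw, a * s, 1 - a * s, hc0, by linarith, by ring, ?_⟩
    rw [hw_def, ← haby, ← hy']
    match_scalars
    · ring
    · field_simp
    · field_simp
  exact key s t p q hs ht hst hp hq hsty

lemma minFace_convex {X : Set E} (hX : Convex ℝ X) {x : E} : Convex ℝ (minFace X x) := by
  rintro y₁ ⟨hy₁, z₁, hz₁, s₁, r₁, hs₁, hr₁, hsr₁, h₁⟩ y₂ ⟨hy₂, z₂, hz₂, s₂, r₂, hs₂, hr₂, hsr₂, h₂⟩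
    a b ha hb hab
  rcases eq_or_lt_of_le ha with ha0 | ha
  · simp only [← ha0, zero_smul, zero_add]
    have hb1 : b = 1 := by linarith
    rw [hb1, one_smul]
    exact ⟨hy₂, z₂, hz₂, s₂, r₂, hs₂, hr₂, hsr₂, h₂⟩
  rcases eq_or_lt_of_le hb with hb0 | hb
  · simp only [← hb0, zero_smul, add_zero]
    have ha1 : a = 1 := by linarith
    rw [ha1, one_smul]
    exact ⟨hy₁, z₁, hz₁, s₁, r₁, hs₁, hr₁, hsr₁, h₁⟩
  have hs₁1 : s₁ < 1 := by linarith
  have hs₂1 : s₂ < 1 := by linarith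
  have hs₁0 : s₁ ≠ 0 := ne_of_gt hs₁
  have hs₂0 : s₂ ≠ 0 := ne_of_gt hs₂
  have hN : 0 < a * s₂ + b * s₁ := by positivity
  have hNne : a * s₂ + b * s₁ ≠ 0 := ne_of_gt hN
  have hμnum : s₁ * s₂ < a * s₂ + b * s₁ := by
    nlinarith [mul_pos (mul_pos ha hs₂) (by linarith : (0:ℝ) < 1 - s₁),
      mul_pos (mul_pos hb hs₁) (by linarith : (0:ℝ) < 1 - s₂)]
  have hsub : a * s₂ + b * s₁ - s₁ * s₂ ≠ 0 := by linarith
  have hμ0 : 0 < s₁ * s₂ / (a * s₂ + b * s₁) := by positivity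
  have hμ1 : s₁ * s₂ / (a * s₂ + b * s₁) < 1 := (div_lt_one hN).2 hμnum
  have h1μ : 0 < 1 - s₁ * s₂ / (a * s₂ + b * s₁) := by linarith
  have h1μne : 1 - s₁ * s₂ / (a * s₂ + b * s₁) ≠ 0 := ne_of_gt h1μ
  have hpoly : a * s₂ * r₁ + b * s₁ * r₂ = (a * s₂ + b * s₁) - s₁ * s₂ := by
    linear_combination (a * s₂) * hsr₁ + (b * s₁) * hsr₂ - (s₁ * s₂) * hab
  have hc₁0 : (0:ℝ) ≤ a * s₂ / (a * s₂ + b * s₁) * r₁ / (1 - s₁ * s₂ / (a * s₂ + b * s₁)) := by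
    apply div_nonneg _ h1μ.le
    positivity
  have hc₂0 : (0:ℝ) ≤ b * s₁ / (a * s₂ + b * s₁) * r₂ / (1 - s₁ * s₂ / (a * s₂ + b * s₁)) := by
    apply div_nonneg _ h1μ.le
    positivity
  have hwsum : a * s₂ / (a * s₂ + b * s₁) * r₁ / (1 - s₁ * s₂ / (a * s₂ + b * s₁))
      + b * s₁ / (a * s₂ + b * s₁) * r₂ / (1 - s₁ * s₂ / (a * s₂ + b * s₁)) = 1 := by
    rw [← add_div, div_eq_one_iff_eq h1μne]
    field_simp
    linear_combination (a * s₂) * hsr₁ + (b * s₁) * hsr₂ - (s₁ * s₂) * hab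
  set w : E := (a * s₂ / (a * s₂ + b * s₁) * r₁ / (1 - s₁ * s₂ / (a * s₂ + b * s₁))) • z₁
    + (b * s₁ / (a * s₂ + b * s₁) * r₂ / (1 - s₁ * s₂ / (a * s₂ + b * s₁))) • z₂ with hw_def
  have hw : w ∈ X := hX hz₁ hz₂ hc₁0 hc₂0 hwsum
  refine ⟨hX hy₁ hy₂ ha.le hb.le hab, w, hw, s₁ * s₂ / (a * s₂ + b * s₁),
    1 - s₁ * s₂ / (a * s₂ + b * s₁), hμ0, h1μ, by ring, ?_⟩
  have hcsum : a * s₂ / (a * s₂ + b * s₁) + b * s₁ / (a * s₂ + b * s₁) = 1 := by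
    rw [← add_div, div_eq_one_iff_eq hNne]
  have hx1 : x = (a * s₂ / (a * s₂ + b * s₁)) • (s₁ • y₁ + r₁ • z₁)
      + (b * s₁ / (a * s₂ + b * s₁)) • (s₂ • y₂ + r₂ • z₂) := by
    rw [h₁, h₂, ← add_smul, hcsum, one_smul]
  rw [hw_def, hx1]
  match_scalars
  · field_simp
  · field_simp
  · field_simp; exact div_self (by contrapose! hsub; linarith)
  · field_simp; exact div_self (by contrapose! hsub; linarith)

end MinFace

section Polytope
variable {E : Type*} [AddCommGroup E] [Module ℝ E]

lemma extreme_mem_support_mem {V : Finset E} {F : Set E}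
    (hF : IsExtreme ℝ (convexHull ℝ (V : Set E)) F) {y : E} (hy : y ∈ F)
    {w : E → ℝ} (hw0 : ∀ v ∈ V, 0 ≤ w v) (hw1 : ∑ v ∈ V, w v = 1)
    (hwy : ∑ v ∈ V, w v • v = y) {v : E} (hv : v ∈ V) (hvne : w v ≠ 0) : v ∈ F := by
  classical
  have hc0 : 0 < w v := lt_of_le_of_ne (hw0 v hv) (Ne.symm hvne)
  have hsum_split : w v • v + ∑ i ∈ V.erase v, w i • i = ∑ i ∈ V, w i • i :=
    Finset.add_sum_erase V (fun i => w i • i) hv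
  have hsum_w : w v + ∑ i ∈ V.erase v, w i = 1 := by
    rw [Finset.add_sum_erase V w hv]; exact hw1
  have herase_nonneg : ∀ i ∈ V.erase v, 0 ≤ w i :=
    fun i hi => hw0 i (Finset.mem_of_mem_erase hi)
  rcases eq_or_lt_of_le (by linarith [Finset.sum_nonneg herase_nonneg] : w v ≤ 1) with hc1 | hc1
  · -- w v = 1 : all other weights vanish, y = v
    have hz : ∑ i ∈ V.erase v, w i = 0 := by linarith
    have hall : ∀ i ∈ V.erase v, w i = 0 :=
      fun i hi => (Finset.sum_eq_zero_iff_of_nonneg herase_nonneg).1 hz i hi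
    have hyv : y = v := by
      rw [← hwy, ← hsum_split, Finset.sum_eq_zero (fun i hi => by rw [hall i hi, zero_smul]),
        add_zero, hc1, one_smul]
    rwa [← hyv]
  · -- w v < 1
    have hsum_pos : 0 < ∑ i ∈ V.erase v, w i := by linarith
    set z : E := (V.erase v).centerMass w id with hz_def
    have hzP : z ∈ convexHull ℝ (V : Set E) :=
      Finset.centerMass_mem_convexHull _ herase_nonneg hsum_pos
        (fun i hi => Finset.mem_coe.2 (Finset.mem_of_mem_erase hi))
    have hvP : v ∈ convexHull ℝ (V : Set E) := subset_convexHull ℝ _ hv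
    have hzsum : (1 - w v) • z = ∑ i ∈ V.erase v, w i • i := by
      rw [hz_def, Finset.centerMass, smul_smul]
      have : ∑ i ∈ V.erase v, w i = 1 - w v := by linarith
      rw [this, mul_inv_cancel₀ (by linarith : (1:ℝ) - w v ≠ 0), one_smul]
      simp [id]
    have hyseg : y ∈ openSegment ℝ v z := by
      refine ⟨w v, 1 - w v, hc0, by linarith, by ring, ?_⟩
      rw [hzsum, hsum_split, hwy]
    exact hF.2 hvP hzP hy hyseg

/-- An extreme subset of the convex hull of a finite set is spanned by the
members of `V` it contains (provided it is convex). -/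
lemma extreme_eq_convexHull_inter {V : Finset E} {F : Set E}
    (hF : IsExtreme ℝ (convexHull ℝ (V : Set E)) F) (hFc : Convex ℝ F) :
    F = convexHull ℝ ((V : Set E) ∩ F) := by
  classical
  apply Set.Subset.antisymm
  · intro y hy
    have hyP : y ∈ convexHull ℝ (V : Set E) := hF.1 hy
    rw [Finset.mem_convexHull'] at hyP
    obtain ⟨w, hw0, hw1, hwy⟩ := hyP
    have hsupp : ∀ v ∈ V.filter (fun v => w v ≠ 0), v ∈ (V : Set E) ∩ F := by
      intro v hv
      rw [Finset.mem_filter] at hv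
      exact ⟨hv.1, extreme_mem_support_mem hF hy hw0 hw1 hwy hv.1 hv.2⟩
    have hy' : y ∈ convexHull ℝ ((V.filter (fun v => w v ≠ 0) : Finset E) : Set E) := by
      rw [Finset.mem_convexHull']
      refine ⟨w, fun i hi => hw0 i (Finset.mem_of_mem_filter i hi), ?_, ?_⟩
      · rw [Finset.sum_filter_ne_zero]; exact hw1
      · rw [Finset.sum_filter_of_ne (fun i _ h => by
          intro h0; exact h (by rw [h0, zero_smul]))]
        exact hwy
    exact convexHull_mono (fun v hv => hsupp v hv) hy'
  · exact convexHull_min (fun v hv => hv.2) hFc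
end Polytope

section Cross

variable {d : ℕ}
local notation "Pt" => EuclideanSpace ℝ (Fin d)

lemma inner_combo (u y z : Pt) (a b : ℝ) :
    ⟪u, a • y + b • z⟫ = a * ⟪u, y⟫ + b * ⟪u, z⟫ := by
  rw [inner_add_right, real_inner_smul_right, real_inner_smul_right]

lemma exists_convex_combo {fa fb β : ℝ} (h1 : fa < β) (h2 : β < fb) :
    ∃ s t : ℝ, 0 < s ∧ 0 < t ∧ s + t = 1 ∧ s * fa + t * fb = β := by
  have hd : 0 < fb - fa := by linarith
  have hdne : fb - fa ≠ 0 := ne_of_gt hd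
  refine ⟨(fb - β)/(fb - fa), (β - fa)/(fb - fa), div_pos (by linarith) hd, div_pos (by linarith) hd, ?_, ?_⟩
  · field_simp; ring
  · field_simp
    ring

lemma unique_pos_extremePoint {G : Set Pt} (hG : Convex ℝ G) {u : Pt} {β : ℝ} {z : Pt}
    (hsingle : ∀ y ∈ G, ⟪u, y⟫ = β → y = z) {e e' em : Pt}
    (he : e ∈ Set.extremePoints ℝ G) (he' : e' ∈ Set.extremePoints ℝ G) (hem : em ∈ G)
    (hfe : β < ⟪u, e⟫) (hfe' : β < ⟪u, e'⟫) (hfem : ⟪u, em⟫ < β) : e = e' := by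
  obtain ⟨s₁, t₁, hs₁, ht₁, hst₁, hc₁⟩ := exists_convex_combo hfem hfe
  obtain ⟨s₂, t₂, hs₂, ht₂, hst₂, hc₂⟩ := exists_convex_combo hfem hfe'
  have heG : e ∈ G := he.1
  have he'G : e' ∈ G := he'.1
  have hz₁ : s₁ • em + t₁ • e = z := by
    apply hsingle _ (hG hem heG hs₁.le ht₁.le hst₁)
    rw [inner_combo]; exact hc₁
  have hz₂ : s₂ • em + t₂ • e' = z := by
    apply hsingle _ (hG hem he'G hs₂.le ht₂.le hst₂)
    rw [inner_combo]; exact hc₂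
  have heq : s₁ • em + t₁ • e = s₂ • em + t₂ • e' := by rw [hz₁, hz₂]
  rcases lt_trichotomy t₁ t₂ with hlt | heqt | hgt
  · -- e' ∈ openSegment e em, so e' = e by extremality of e'
    have hv : (t₁/t₂) • e + ((t₂ - t₁)/t₂) • em = e' := by
      apply smul_right_injective Pt (ne_of_gt ht₂)
      show t₂ • ((t₁/t₂) • e + ((t₂ - t₁)/t₂) • em) = t₂ • e'
      have h2 : t₂ • e' = t₁ • e + (s₁ - s₂) • em := by
        rw [sub_smul]
        have := heq.symm
        calc t₂ • e' = (s₂ • em + t₂ • e') - s₂ • em := by abel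
        _ = (s₁ • em + t₁ • e) - s₂ • em := by rw [← heq]
        _ = t₁ • e + (s₁ • em - s₂ • em) := by abel
      rw [h2]
      have hs : s₁ - s₂ = t₂ - t₁ := by linarith
      rw [hs, smul_add, smul_smul, smul_smul]
      rw [mul_div_cancel₀ _ (ne_of_gt ht₂), mul_div_cancel₀ _ (ne_of_gt ht₂)]
    have hseg : e' ∈ openSegment ℝ e em :=
      ⟨t₁/t₂, (t₂ - t₁)/t₂, div_pos ht₁ ht₂, div_pos (by linarith) ht₂,
        (by field_simp; ring), hv⟩
    exact he'.2 heG hem hseg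
  · -- t₁ = t₂ : cancel
    apply smul_right_injective Pt (ne_of_gt ht₁)
    show t₁ • e = t₁ • e'
    have hs : s₁ = s₂ := by linarith
    have : t₁ • e = t₂ • e' := by
      calc t₁ • e = (s₁ • em + t₁ • e) - s₁ • em := by abel
      _ = (s₂ • em + t₂ • e') - s₂ • em := by rw [heq, hs]
      _ = t₂ • e' := by abel
    rw [this, heqt]
  · -- e ∈ openSegment e' em
    have hv : (t₂/t₁) • e' + ((t₁ - t₂)/t₁) • em = e := by
      apply smul_right_injective Pt (ne_of_gt ht₁)
      show t₁ • ((t₂/t₁) • e' + ((t₁ - t₂)/t₁) • em) = t₁ • e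
      have h2 : t₁ • e = t₂ • e' + (s₂ - s₁) • em := by
        rw [sub_smul]
        calc t₁ • e = (s₁ • em + t₁ • e) - s₁ • em := by abel
        _ = (s₂ • em + t₂ • e') - s₁ • em := by rw [heq]
        _ = t₂ • e' + (s₂ • em - s₁ • em) := by abel
      rw [h2]
      have hs : s₂ - s₁ = t₁ - t₂ := by linarith
      rw [hs, smul_add, smul_smul, smul_smul]
      rw [mul_div_cancel₀ _ (ne_of_gt ht₁), mul_div_cancel₀ _ (ne_of_gt ht₁)]
    have hseg : e ∈ openSegment ℝ e' em :=
      ⟨t₂/t₁, (t₁ - t₂)/t₁, div_pos ht₂ ht₁, div_pos (by linarith) ht₁,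
        (by field_simp; ring), hv⟩
    exact (he.2 he'G hem hseg).symm
end Cross


section LemmaA
variable {d : ℕ}
local notation "Pt" => EuclideanSpace ℝ (Fin d)

lemma innerLinear (u : Pt) : IsLinearMap ℝ (fun y : Pt => ⟪u, y⟫) :=
  ⟨fun x y => inner_add_right u x y, fun c x => real_inner_smul_right u x c⟩

/-- Wrapper of `extreme_eq_convexHull_inter` for finite sets. -/
lemma extreme_eq_convexHull_inter' {W : Set Pt} (hW : W.Finite) {F : Set Pt}
    (hF : IsExtreme ℝ (convexHull ℝ W) F) (hFc : Convex ℝ F) :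
    F = convexHull ℝ (W ∩ F) := by
  have h1 : IsExtreme ℝ (convexHull ℝ (hW.toFinset : Set Pt)) F := by
    rwa [hW.coe_toFinset]
  have := extreme_eq_convexHull_inter h1 hFc
  rwa [hW.coe_toFinset] at this

/-- Core lemma: if a hyperplane meets a polytope but contains none of its extreme
points, then it crosses the relative interior of one of its edges. -/
lemma exists_crossed_edge {W : Set Pt} (hWfin : W.Finite) {F : Set Pt}
    (hFW : F = convexHull ℝ W) (u : Pt) (β : ℝ)
    (hne : ∀ v ∈ Set.extremePoints ℝ F, ⟪u, v⟫ ≠ β)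
    {x : Pt} (hx : x ∈ F) (hxβ : ⟪u, x⟫ = β) :
    ∃ a b : Pt, a ≠ b ∧ IsExtreme ℝ F (segment ℝ a b) ∧
      (⟪u, a⟫ - β) * (⟪u, b⟫ - β) < 0 := by
  have hFconv : Convex ℝ F := hFW ▸ convex_convexHull ℝ W
  have hFcomp : IsCompact F := hFW ▸ (hWfin.isCompact_convexHull ℝ)
  set T : Set Pt := F ∩ {y | ⟪u, y⟫ = β} with hT_def
  have hTcomp : IsCompact T := hFcomp.inter_right
    (isClosed_eq (Continuous.inner continuous_const continuous_id) continuous_const)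
  obtain ⟨z, hz⟩ := hTcomp.extremePoints_nonempty ⟨x, hx, hxβ⟩
  rw [mem_extremePoints] at hz
  obtain ⟨⟨hzF, hzβ⟩, hzext⟩ := hz
  set G : Set Pt := minFace F z with hG_def
  have hGext : IsExtreme ℝ F G := minFace_isExtreme hFconv hzF
  have hGconv : Convex ℝ G := minFace_convex hFconv
  have hzG : z ∈ G := self_mem_minFace hzF
  have hsingle : ∀ y ∈ G, ⟪u, y⟫ = β → y = z := by
    rintro y ⟨hyF, w, hwF, s, t, hs, ht, hst, hw⟩ hyβ
    have hfw : ⟪u, w⟫ = β := by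
      have hz2 : ⟪u, z⟫ = β := hzβ
      have h1 : (β:ℝ) = s * ⟪u, y⟫ + t * ⟪u, w⟫ := by
        rw [← hz2, ← hw, inner_combo]
      rw [hyβ] at h1
      have ht' : t ≠ 0 := ne_of_gt ht
      have : t * β = t * ⟪u, w⟫ := by linear_combination h1 + β * hst
      exact (mul_left_cancel₀ ht' this).symm
    exact (hzext y ⟨hyF, hyβ⟩ w ⟨hwF, hfw⟩ ⟨s, t, hs, ht, hst, hw⟩).1
  have hGsub : G = convexHull ℝ (W ∩ G) :=
    extreme_eq_convexHull_inter' hWfin (hFW ▸ hGext) hGconv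
  have hGcomp : IsCompact G := by
    rw [hGsub]; exact (hWfin.inter_of_left _).isCompact_convexHull ℝ
  have hEPfin : (Set.extremePoints ℝ G).Finite := by
    apply (hWfin.inter_of_left G).subset
    conv_lhs => rw [hGsub]
    exact extremePoints_convexHull_subset
  have hEP : G = convexHull ℝ (Set.extremePoints ℝ G) := by
    conv_lhs => rw [← closure_convexHull_extremePoints hGcomp hGconv]
    exact (hEPfin.isClosed_convexHull ℝ).closure_eq
  have hEsub : Set.extremePoints ℝ G ⊆ Set.extremePoints ℝ F :=
    hGext.extremePoints_subset_extremePoints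
  have hEne : ∀ e ∈ Set.extremePoints ℝ G, ⟪u, e⟫ ≠ β := fun e he => hne e (hEsub he)
  have hzG' : z ∈ convexHull ℝ (Set.extremePoints ℝ G) := hEP ▸ hzG
  -- extreme points on both sides
  have heplus : ∃ e ∈ Set.extremePoints ℝ G, β < ⟪u, e⟫ := by
    by_contra h
    push_neg at h
    have hsub : Set.extremePoints ℝ G ⊆ {y : Pt | ⟪u, y⟫ < β} := by
      intro e he
      exact lt_of_le_of_ne (h e he) (hEne e he)
    have := convexHull_min hsub (convex_halfSpace_lt (innerLinear u) β) hzG'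
    exact absurd hzβ (ne_of_lt this)
  have heminus : ∃ e ∈ Set.extremePoints ℝ G, ⟪u, e⟫ < β := by
    by_contra h
    push_neg at h
    have hsub : Set.extremePoints ℝ G ⊆ {y : Pt | β < ⟪u, y⟫} := by
      intro e he
      exact lt_of_le_of_ne (h e he) (Ne.symm (hEne e he))
    have := convexHull_min hsub (convex_halfSpace_gt (innerLinear u) β) hzG'
    exact absurd hzβ (ne_of_gt this)
  obtain ⟨ep, hep, hepβ⟩ := heplus
  obtain ⟨em, hem, hemβ⟩ := heminus
  -- uniqueness on each side
  have huniq_pos : ∀ e ∈ Set.extremePoints ℝ G, β < ⟪u, e⟫ → e = ep :=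
    fun e he hbe => unique_pos_extremePoint hGconv hsingle he hep hem.1 hbe hepβ hemβ
  have hsingle' : ∀ y ∈ G, ⟪(-u : Pt), y⟫ = -β → y = z := by
    intro y hy hyβ
    apply hsingle y hy
    rw [inner_neg_left] at hyβ
    linarith
  have huniq_neg : ∀ e ∈ Set.extremePoints ℝ G, ⟪u, e⟫ < β → e = em := by
    intro e he hbe
    refine unique_pos_extremePoint (u := -u) (β := -β) hGconv hsingle' he hem hep.1 ?_ ?_ ?_
    · rw [inner_neg_left]; linarith
    · rw [inner_neg_left]; linarith
    · rw [inner_neg_left]; linarith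
  have hEeq : Set.extremePoints ℝ G = {ep, em} := by
    apply Set.Subset.antisymm
    · intro e he
      rcases lt_trichotomy (⟪u, e⟫) β with h | h | h
      · exact Set.mem_insert_iff.2 (Or.inr (huniq_neg e he h))
      · exact absurd h (hEne e he)
      · exact Set.mem_insert_iff.2 (Or.inl (huniq_pos e he h))
    · rintro e (rfl | rfl)
      exacts [hep, hem]
  have hGseg : G = segment ℝ ep em := by
    rw [hEP, hEeq, convexHull_pair]
  refine ⟨ep, em, ?_, hGseg ▸ hGext, ?_⟩
  · rintro rfl
    exact absurd hepβ (not_lt.2 hemβ.le)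
  · exact mul_neg_of_pos_of_neg (by linarith) (by linarith)

end LemmaA


/-- `segment ℝ a b` (with `a ≠ b`) is an edge of `P` if it is a (1-dimensional) face of `P`. -/
def IsEdgeOf {d : ℕ} (P : Set (EuclideanSpace ℝ (Fin d))) (a b : EuclideanSpace ℝ (Fin d)) :
    Prop :=
  a ≠ b ∧ IsExtreme ℝ P (segment ℝ a b)

section Main
variable {d : ℕ}
local notation "Pt" => EuclideanSpace ℝ (Fin d)

/-- Key lemma: if `x ∈ P` lies on the hyperplane `H₁`, then the hyperplane `H₂` meets
the minimal face of `x` in a point `z` whose minimal face still contains `x`. -/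
lemma key_lemma (V : Finset Pt) {P : Set Pt} (hP : P = convexHull ℝ (V : Set Pt))
    {u₁ u₂ : Pt} {β₁ β₂ : ℝ}
    (hnovert₁ : ∀ v ∈ Set.extremePoints ℝ P, ⟪u₁, v⟫ ≠ β₁)
    (hsame : ∀ a b : Pt, IsEdgeOf P a b →
      (⟪u₁, a⟫ - β₁) * (⟪u₁, b⟫ - β₁) < 0 → (⟪u₂, a⟫ - β₂) * (⟪u₂, b⟫ - β₂) < 0)
    {x : Pt} (hx : x ∈ P) (hxβ : ⟪u₁, x⟫ = β₁) :
    ∃ z ∈ minFace P x, ⟪u₂, z⟫ = β₂ ∧ x ∈ minFace P z := by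
  have hPconv : Convex ℝ P := hP ▸ convex_convexHull ℝ _
  by_cases hx2 : ⟪u₂, x⟫ = β₂
  · exact ⟨x, self_mem_minFace hx, hx2, self_mem_minFace hx⟩
  have hFext : IsExtreme ℝ P (minFace P x) := minFace_isExtreme hPconv hx
  have hFconv : Convex ℝ (minFace P x) := minFace_convex hPconv
  have hFW : minFace P x = convexHull ℝ ((V : Set Pt) ∩ minFace P x) :=
    extreme_eq_convexHull_inter (hP ▸ hFext) hFconv
  have hneF : ∀ v ∈ Set.extremePoints ℝ (minFace P x), ⟪u₁, v⟫ ≠ β₁ :=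
    fun v hv => hnovert₁ v (hFext.extremePoints_subset_extremePoints hv)
  obtain ⟨a, b, hab, hedge, hcross₁⟩ :=
    exists_crossed_edge (V.finite_toSet.inter_of_left _) hFW u₁ β₁ hneF
      (self_mem_minFace hx) hxβ
  have hPedge : IsExtreme ℝ P (segment ℝ a b) := hFext.trans hedge
  have hcross₂ := hsame a b ⟨hab, hPedge⟩ hcross₁
  have haF : a ∈ minFace P x := hedge.1 (left_mem_segment ℝ a b)
  have hbF : b ∈ minFace P x := hedge.1 (right_mem_segment ℝ a b)
  have hxF : x ∈ minFace P x := self_mem_minFace hx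
  -- pick the endpoint on the opposite side of H₂ from x
  have hcases : ∃ e ∈ minFace P x,
      (⟪u₂, x⟫ < β₂ ∧ β₂ < ⟪u₂, e⟫) ∨ (⟪u₂, e⟫ < β₂ ∧ β₂ < ⟪u₂, x⟫) := by
    rcases mul_neg_iff.1 hcross₂ with ⟨hpa, hnb⟩ | ⟨hna, hpb⟩
    · -- ⟪u₂,a⟫ > β₂ > ⟪u₂,b⟫
      rcases lt_or_gt_of_ne hx2 with h | h
      · exact ⟨a, haF, Or.inl ⟨h, by linarith⟩⟩
      · exact ⟨b, hbF, Or.inr ⟨by linarith, h⟩⟩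
    · rcases lt_or_gt_of_ne hx2 with h | h
      · exact ⟨b, hbF, Or.inl ⟨h, by linarith⟩⟩
      · exact ⟨a, haF, Or.inr ⟨by linarith, h⟩⟩
  obtain ⟨e, heF, hcase⟩ := hcases
  have heP : e ∈ P := hFext.1 heF
  rcases hcase with ⟨h1, h2⟩ | ⟨h1, h2⟩
  · obtain ⟨s, t, hs, ht, hst, hcombo⟩ := exists_convex_combo h1 h2
    refine ⟨s • x + t • e, hFconv hxF heF hs.le ht.le hst, ?_, ?_⟩
    · rw [inner_combo]; exact hcombo
    · exact ⟨hx, e, heP, s, t, hs, ht, hst, rfl⟩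
  · obtain ⟨s, t, hs, ht, hst, hcombo⟩ := exists_convex_combo h1 h2
    refine ⟨s • e + t • x, hFconv heF hxF hs.le ht.le hst, ?_, ?_⟩
    · rw [inner_combo]; exact hcombo
    · exact ⟨hx, e, heP, t, s, ht, hs, by linarith, (add_comm _ _)⟩

/-- The section-face transport map. -/
def phiMap (P : Set Pt) (u : Pt) (β : ℝ) (A : Set Pt) : Set Pt :=
  {y | ⟪u, y⟫ = β ∧ ∃ x ∈ A, y ∈ minFace P x}

lemma phiMap_mono {P : Set Pt} {u : Pt} {β : ℝ} {A B : Set Pt} (h : A ⊆ B) :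
    phiMap P u β A ⊆ phiMap P u β B := by
  rintro y ⟨hyβ, x, hxA, hyF⟩
  exact ⟨hyβ, x, h hxA, hyF⟩

lemma phiMap_extreme {P : Set Pt} (hPconv : Convex ℝ P) {u₁ u₂ : Pt} {β₁ β₂ : ℝ} {A : Set Pt}
    (hA : IsExtreme ℝ (P ∩ {x | ⟪u₁, x⟫ = β₁}) A) :
    IsExtreme ℝ (P ∩ {x | ⟪u₂, x⟫ = β₂}) (phiMap P u₂ β₂ A) := by
  constructor
  · rintro y ⟨hyβ, x, hxA, hyF⟩
    exact ⟨minFace_subset hyF, hyβ⟩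
  · rintro p hp q hq y ⟨hyβ, x, hxA, hyF⟩ hseg
    have hxP : x ∈ P := (hA.1 hxA).1
    have hFext : IsExtreme ℝ P (minFace P x) := minFace_isExtreme hPconv hxP
    have := hFext.2 hp.1 hq.1 hyF hseg
    exact ⟨hp.2, x, hxA, this⟩

lemma psi_phi (V : Finset Pt) {P : Set Pt} (hP : P = convexHull ℝ (V : Set Pt))
    {u₁ u₂ : Pt} {β₁ β₂ : ℝ}
    (hnovert₁ : ∀ v ∈ Set.extremePoints ℝ P, ⟪u₁, v⟫ ≠ β₁)
    (hsame : ∀ a b : Pt, IsEdgeOf P a b →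
      (⟪u₁, a⟫ - β₁) * (⟪u₁, b⟫ - β₁) < 0 → (⟪u₂, a⟫ - β₂) * (⟪u₂, b⟫ - β₂) < 0)
    {A : Set Pt} (hA : IsExtreme ℝ (P ∩ {x | ⟪u₁, x⟫ = β₁}) A) :
    phiMap P u₁ β₁ (phiMap P u₂ β₂ A) = A := by
  have hPconv : Convex ℝ P := hP ▸ convex_convexHull ℝ _
  ext y; constructor
  · rintro ⟨hyβ₁, z, ⟨hzβ₂, x, hxA, hzFx⟩, hyFz⟩
    have hxP : x ∈ P := (hA.1 hxA).1
    have hFxext : IsExtreme ℝ P (minFace P x) := minFace_isExtreme hPconv hxP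
    have hyFx : y ∈ minFace P x := minFace_subset_extreme hFxext hzFx hyFz
    obtain ⟨hyP, w, hwP, s, t, hs, ht, hst, hw⟩ := hyFx
    have hxβ : ⟪u₁, x⟫ = β₁ := (hA.1 hxA).2
    have hwβ : ⟪u₁, w⟫ = β₁ := by
      have h1 : β₁ = s * ⟪u₁, y⟫ + t * ⟪u₁, w⟫ := by rw [← hxβ, ← hw, inner_combo]
      rw [hyβ₁] at h1
      have h2 : t * β₁ = t * ⟪u₁, w⟫ := by linear_combination h1 + β₁ * hst
      exact (mul_left_cancel₀ (ne_of_gt ht) h2).symm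
    exact hA.2 ⟨hyP, hyβ₁⟩ ⟨hwP, hwβ⟩ hxA ⟨s, t, hs, ht, hst, hw⟩
  · intro hyA
    have hyP : y ∈ P := (hA.1 hyA).1
    have hyβ : ⟪u₁, y⟫ = β₁ := (hA.1 hyA).2
    obtain ⟨z, hzF, hzβ, hyFz⟩ := key_lemma V hP hnovert₁ hsame hyP hyβ
    exact ⟨hyβ, z, ⟨hzβ, y, hyA, hzF⟩, hyFz⟩

end Main

/-- If two affine hyperplanes `H₁, H₂`, neither containing a vertex of a polytope `P`,
intersect the relative interiors of exactly the same set of edges of `P`, then the sections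
`P ∩ H₁` and `P ∩ H₂` are combinatorially equivalent: their face lattices (posets of extreme
subsets ordered by inclusion) are isomorphic. -/
theorem comb_equiv_of_same_edges {d : ℕ} (V : Finset (EuclideanSpace ℝ (Fin d)))
    (P : Set (EuclideanSpace ℝ (Fin d)))
    (hP : P = convexHull ℝ (V : Set (EuclideanSpace ℝ (Fin d))))
    (u₁ u₂ : EuclideanSpace ℝ (Fin d)) (hu₁ : u₁ ≠ 0) (hu₂ : u₂ ≠ 0) (β₁ β₂ : ℝ)
    (hnovert₁ : ∀ v ∈ Set.extremePoints ℝ P, ⟪u₁, v⟫ ≠ β₁)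
    (hnovert₂ : ∀ v ∈ Set.extremePoints ℝ P, ⟪u₂, v⟫ ≠ β₂)
    (hsame : ∀ a b : EuclideanSpace ℝ (Fin d), IsEdgeOf P a b →
      ((⟪u₁, a⟫ - β₁) * (⟪u₁, b⟫ - β₁) < 0 ↔ (⟪u₂, a⟫ - β₂) * (⟪u₂, b⟫ - β₂) < 0)) :
    Nonempty
      ({F : Set (EuclideanSpace ℝ (Fin d)) // IsExtreme ℝ (P ∩ {x | ⟪u₁, x⟫ = β₁}) F} ≃o
       {F : Set (EuclideanSpace ℝ (Fin d)) // IsExtreme ℝ (P ∩ {x | ⟪u₂, x⟫ = β₂}) F}) := by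
  have hPconv : Convex ℝ P := hP ▸ convex_convexHull ℝ _
  have hsame12 : ∀ a b : EuclideanSpace ℝ (Fin d), IsEdgeOf P a b →
      (⟪u₁, a⟫ - β₁) * (⟪u₁, b⟫ - β₁) < 0 → (⟪u₂, a⟫ - β₂) * (⟪u₂, b⟫ - β₂) < 0 :=
    fun a b he h => (hsame a b he).1 h
  have hsame21 : ∀ a b : EuclideanSpace ℝ (Fin d), IsEdgeOf P a b →
      (⟪u₂, a⟫ - β₂) * (⟪u₂, b⟫ - β₂) < 0 → (⟪u₁, a⟫ - β₁) * (⟪u₁, b⟫ - β₁) < 0 :=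
    fun a b he h => (hsame a b he).2 h
  refine ⟨⟨⟨fun A => ⟨phiMap P u₂ β₂ A.1, phiMap_extreme hPconv A.2⟩,
    fun B => ⟨phiMap P u₁ β₁ B.1, phiMap_extreme hPconv B.2⟩, ?_, ?_⟩, ?_⟩⟩
  · intro A
    exact Subtype.ext (psi_phi V hP hnovert₁ hsame12 A.2)
  · intro B
    exact Subtype.ext (psi_phi V hP hnovert₂ hsame21 B.2)
  · intro A B
    constructor
    · intro h
      have h2 : phiMap P u₁ β₁ (phiMap P u₂ β₂ A.1) ⊆
          phiMap P u₁ β₁ (phiMap P u₂ β₂ B.1) := phiMap_mono h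
      rwa [psi_phi V hP hnovert₁ hsame12 A.2, psi_phi V hP hnovert₁ hsame12 B.2] at h2
    · intro h
      exact phiMap_mono h
end
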